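/- arXiv:2410.05110 — 4 statements merged into one kernel-verified Lean document; each statement's English description precedes it below -/
import Mathlib

section
/- The length of the element w_{k,l} = t^μ · s_{n-2}s_{n-3}···s_k · s_{n-1}s_{n-2}···s_l in the extended affine Weyl group of GL_n equals k + l - 3, where μ = (0,...,0,-1,-1) and 1 ≤ k < l ≤ n. -/
open Equiv Multiplicative Fin.NatCast

namespace GU

/-- The action of the finite Weyl group `S_n` on the translation lattice `ℤ^n`. -/
def permHom (n : ℕ) : Equiv.Perm (Fin n) →* MulAut (Multiplicative (Fin n → ℤ)) where
  toFun u :=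
    { toFun := fun l => ofAdd (fun i => toAdd l (u.symm i))
      invFun := fun l => ofAdd (fun i => toAdd l (u i))
      left_inv := fun l => by
        show ofAdd (fun i => toAdd l (u.symm (u i))) = l
        simp
      right_inv := fun l => by
        show ofAdd (fun i => toAdd l (u (u.symm i))) = l
        simp
      map_mul' := fun a b => rfl }
  map_one' := by
    apply MulEquiv.ext; intro l; rfl
  map_mul' := fun a b => by
    apply MulEquiv.ext; intro l; rfl

/-- The extended affine Weyl group of `GL_n`, realized as `ℤ^n ⋊ S_n`,
where `⟨l, u⟩` represents `t^l · u`. -/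
abbrev Wt (n : ℕ) := Multiplicative (Fin n → ℤ) ⋊[permHom n] Equiv.Perm (Fin n)

variable (n : ℕ) [NeZero n]

/-- The translation element `t^l`. -/
def tW (l : Fin n → ℤ) : Wt n := ⟨ofAdd l, 1⟩

/-- The finite simple reflection `s_i = (i, i+1)` (1-based), as a permutation. -/
def sf (i : ℕ) : Equiv.Perm (Fin n) := Equiv.swap ((i - 1 : ℕ) : Fin n) ((i : ℕ) : Fin n)

/-- The finite simple reflection `s_i` as an element of the extended affine Weyl group. -/
def sW (i : ℕ) : Wt n := ⟨1, sf n i⟩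

/-- The affine simple reflection `s_0 = t^{χ_{1,n}^∨} (1 n)`. -/
def s0 : Wt n :=
  ⟨ofAdd (fun j => if j = ((0 : ℕ) : Fin n) then 1 else if j = ((n - 1 : ℕ) : Fin n) then -1 else 0),
   Equiv.swap ((0 : ℕ) : Fin n) ((n - 1 : ℕ) : Fin n)⟩

/-- The affine simple reflections `s_i`, `i ∈ ℤ/n`. -/
def saff (i : ZMod n) : Wt n := if i = 0 then s0 n else sW n i.val

/-- The descending product `s_{[a,b]} = s_a s_{a-1} ⋯ s_b` (equal to `1` if `a < b`). -/
def sdesc (a b : ℕ) : Wt n := ((List.range (a + 1 - b)).map (fun j => sW n (a - j))).prod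

/-- The descending product `s_{[a,b]} = s_a s_{a-1} ⋯ s_b` in the finite Weyl group. -/
def sfdesc (a b : ℕ) : Equiv.Perm (Fin n) :=
  ((List.range (a + 1 - b)).map (fun j => sf n (a - j))).prod

/-- The cocharacter `μ = (0^{(n-2)}, -1, -1)`. -/
def mu : Fin n → ℤ := fun j => if n - 2 ≤ (j : ℕ) then -1 else 0

/-- The element `w_{k,l} = t^μ s_{[n-2,k]} s_{[n-1,l]}`. -/
def w (k l : ℕ) : Wt n := tW n (mu n) * sdesc n (n - 2) k * sdesc n (n - 1) l

/-- The length function `ℓ(u t^λ) = Σ_{α ∈ Φ₊, uα ∈ Φ₋} |⟨α,λ⟩+1| + Σ_{α ∈ Φ₊, uα ∈ Φ₊} |⟨α,λ⟩|`,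
written for `x = t^l u = u t^{u⁻¹ l}`. -/
def len (x : Wt n) : ℕ :=
  ∑ i : Fin n, ∑ j : Fin n,
    if i < j then
      (toAdd x.left (x.right i) - toAdd x.left (x.right j)
        + (if x.right j < x.right i then 1 else 0)).natAbs
    else 0

/-- The automorphism `σ`, with `σ(s_i) = s_{n-i}` and `σ(t^λ) = t^{λ'}`, `λ'_i = -λ_{n+1-i}`. -/
def sigma (x : Wt n) : Wt n :=
  ⟨ofAdd (fun j => - toAdd x.left j.rev), Fin.revPerm * x.right * Fin.revPerm⟩

/-- The length-zero element `τ = w_{1,2}`. -/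
def tau : Wt n := w n 1 2

/-- Affine reflections: conjugates of the affine simple reflections. -/
def isRefl (r : Wt n) : Prop := ∃ g : Wt n, ∃ i : ZMod n, r = g * saff n i * g⁻¹

/-- The Bruhat order on the extended affine Weyl group: `v ≤ x` iff there is a chain
from `v` to `x` each step of which multiplies by an (affine) reflection and increases length. -/
def bruhatLE (v x : Wt n) : Prop :=
  Relation.ReflTransGen
    (fun a b => (∃ r, isRefl n r ∧ b = a * r) ∧ len n a < len n b) v x

/-- The support of an element of the affine Weyl group: the smallest set of (indices of)
affine simple reflections generating a subgroup containing it. -/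
def supp (x : Wt n) : Set (ZMod n) :=
  ⋂₀ {J : Set (ZMod n) | x ∈ Subgroup.closure (saff n '' J)}

/-- The `σ`-support of `x ∈ W_a τ`: the smallest `Ad(τ)∘σ`-stable set of indices
(`Ad(τ)∘σ` sends `s_i` to `s_{-i-2}`) containing the support of the `W_a`-part of `x`. -/
def suppSigma (x : Wt n) : Set (ZMod n) :=
  ⋂₀ {J : Set (ZMod n) | supp n (x * (tau n)⁻¹) ⊆ J ∧ ∀ i ∈ J, -i - 2 ∈ J}

/-- `S(x,σ)`: the largest subset `S'` of the finite simple reflections with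
`Ad(x)σ(S') = S'`, as a set of (1-based) indices. -/
def SwSigma (x : Wt n) : Set ℕ :=
  ⋃₀ {J : Set ℕ | J ⊆ Set.Icc 1 (n - 1) ∧
    (fun i => x * sigma n (sW n i) * x⁻¹) '' J = sW n '' J}

/-- `x` is of minimal length in its coset `W_0 x`. -/
def minimalInCoset (x : Wt n) : Prop :=
  ∀ u : Equiv.Perm (Fin n), len n x ≤ len n ((⟨1, u⟩ : Wt n) * x)

/-- A single length-preserving `σ`-conjugation step `a ↦ s a σ(s)`. -/
def approxStep (a b : Wt n) : Prop :=
  ∃ i : ZMod n, b = saff n i * a * sigma n (saff n i) ∧ len n b = len n a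

/-- `a ≈ b`: `a` and `b` are connected by length-preserving `σ`-conjugation steps. -/
def approx (a b : Wt n) : Prop := Relation.ReflTransGen (approxStep n) a b

end GU

section AuxStmt0

lemma sf_val (n : ℕ) [NeZero n] (i : ℕ) (h1 : 1 ≤ i) (h2 : i < n) (x : Fin n) :
    ((GU.sf n i) x : ℕ) = if (x:ℕ) = i - 1 then i else if (x:ℕ) = i then i - 1 else x := by
  have ha : (((i - 1 : ℕ) : Fin n) : ℕ) = i - 1 := Fin.val_cast_of_lt (by omega)
  have hb : (((i : ℕ) : Fin n) : ℕ) = i := Fin.val_cast_of_lt h2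
  unfold GU.sf
  rw [Equiv.swap_apply_def]
  simp only [apply_ite (Fin.val), Fin.ext_iff, ha, hb]

lemma sfdesc_nil (n : ℕ) [NeZero n] (a b : ℕ) (h : a + 1 ≤ b) : GU.sfdesc n a b = 1 := by
  unfold GU.sfdesc
  rw [Nat.sub_eq_zero_of_le h]
  simp

lemma sfdesc_succ (n : ℕ) [NeZero n] (a b : ℕ) (h : b ≤ a + 1) :
    GU.sfdesc n (a+1) b = GU.sf n (a+1) * GU.sfdesc n a b := by
  unfold GU.sfdesc
  rw [show a + 1 + 1 - b = (a + 1 - b) + 1 from by omega, List.range_succ_eq_map,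
    List.map_cons, List.prod_cons, List.map_map]
  have hmap : List.map ((fun j => GU.sf n (a + 1 - j)) ∘ Nat.succ) (List.range (a + 1 - b))
      = List.map (fun j => GU.sf n (a - j)) (List.range (a + 1 - b)) :=
    List.map_congr_left fun j _ => by
      show GU.sf n (a + 1 - (j + 1)) = GU.sf n (a - j)
      congr 1
      omega
  rw [hmap]
  norm_num

lemma sfdesc_val (n : ℕ) [NeZero n] (b : ℕ) (hb : 1 ≤ b) :
    ∀ a : ℕ, a < n → ∀ x : Fin n,
      ((GU.sfdesc n a b) x : ℕ) =
        if (x:ℕ) < b - 1 then (x:ℕ)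
        else if (x:ℕ) = b - 1 ∧ b - 1 ≤ a then a
        else if (x:ℕ) ≤ a then (x:ℕ) - 1 else (x:ℕ) := by
  intro a
  induction a with
  | zero =>
    intro ha x
    have hx := x.isLt
    rw [sfdesc_nil n 0 b (by omega)]
    simp only [Equiv.Perm.one_apply]
    split_ifs <;> omega
  | succ a ih =>
    intro ha x
    have hx := x.isLt
    by_cases hba : b ≤ a + 1
    · rw [sfdesc_succ n a b hba, Equiv.Perm.mul_apply,
        sf_val n (a+1) (by omega) ha, ih (by omega) x]
      split_ifs <;> omega
    · rw [sfdesc_nil n (a+1) b (by omega)]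
      simp only [Equiv.Perm.one_apply]
      split_ifs <;> omega

end AuxStmt0


lemma sdesc_eq (n : ℕ) [NeZero n] (a b : ℕ) :
    GU.sdesc n a b = SemidirectProduct.inr (φ := GU.permHom n) (GU.sfdesc n a b) := by
  unfold GU.sdesc GU.sfdesc
  rw [show (fun j => GU.sW n (a - j))
      = (SemidirectProduct.inr (φ := GU.permHom n)) ∘ (fun j => GU.sf n (a - j)) from rfl,
    ← List.map_map, ← map_list_prod]

lemma w_right (n : ℕ) [NeZero n] (k l : ℕ) :
    (GU.w n k l).right = GU.sfdesc n (n-2) k * GU.sfdesc n (n-1) l := by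
  simp [GU.w, GU.tW, sdesc_eq]

lemma w_left (n : ℕ) [NeZero n] (k l : ℕ) :
    (GU.w n k l).left = Multiplicative.ofAdd (GU.mu n) := by
  simp [GU.w, GU.tW, sdesc_eq]

/-- The value of the permutation part of `w k l` (0-based). -/
def sigmaVal (n k l x : ℕ) : ℕ :=
  if x < k - 1 then x
  else if x = k - 1 then n - 2
  else if x < l - 1 then x - 1
  else if x = l - 1 then n - 1
  else x - 2

lemma pi_val (n : ℕ) [NeZero n] (k l : ℕ) (hn : 2 ≤ n) (hk : 1 ≤ k) (hkl : k < l)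
    (hl : l ≤ n) (x : Fin n) :
    (((GU.w n k l).right) x : ℕ) = sigmaVal n k l (x : ℕ) := by
  have hx := x.isLt
  rw [w_right, Equiv.Perm.mul_apply,
    sfdesc_val n k hk (n-2) (by omega) ((GU.sfdesc n (n-1) l) x),
    sfdesc_val n l (by omega) (n-1) (by omega) x]
  unfold sigmaVal
  split_ifs <;> omega

lemma sv_big (n k l i : ℕ) (hn : 2 ≤ n) (hk : 1 ≤ k) (hkl : k < l) (hl : l ≤ n)
    (hi : i < n) : n - 2 ≤ sigmaVal n k l i ↔ (i = k - 1 ∨ i = l - 1) := by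
  unfold sigmaVal
  split_ifs <;> omega

lemma sv_lt (n k l i j : ℕ) (hn : 2 ≤ n) (hk : 1 ≤ k) (hkl : k < l) (hl : l ≤ n)
    (hi : i < n) (hj : j < n) (hij : i < j) :
    sigmaVal n k l j < sigmaVal n k l i ↔ ((i = k - 1 ∧ j ≠ l - 1) ∨ i = l - 1) := by
  unfold sigmaVal
  split_ifs <;> omega

lemma term_eval (n k l i j : ℕ) (hn : 2 ≤ n) (hk : 1 ≤ k) (hkl : k < l) (hl : l ≤ n)
    (hi : i < n) (hj : j < n) :
    (if i < j then
      ((if n - 2 ≤ sigmaVal n k l i then (-1 : ℤ) else 0)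
        - (if n - 2 ≤ sigmaVal n k l j then (-1 : ℤ) else 0)
        + (if sigmaVal n k l j < sigmaVal n k l i then (1 : ℤ) else 0)).natAbs
     else 0)
    = if i < j ∧ (j = k - 1 ∨ (j = l - 1 ∧ i ≠ k - 1)) then 1 else 0 := by
  by_cases hij : i < j
  · simp only [if_pos hij, sv_big n k l i hn hk hkl hl hi, sv_big n k l j hn hk hkl hl hj,
      sv_lt n k l i j hn hk hkl hl hi hj hij, true_and]
    split_ifs <;> omega
  · simp [hij]

lemma inner_sum1 (n i c : ℕ) (h : c < n) :
    ∑ j ∈ Finset.range n, (if i < j ∧ j = c then 1 else 0) = if i < c then 1 else 0 := by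
  rw [Finset.sum_eq_single c]
  · simp
  · intro b _ hbc
    simp [hbc]
  · intro hc
    exact absurd (Finset.mem_range.2 h) hc

lemma inner_sum2 (n i c d : ℕ) (h : c < n) :
    ∑ j ∈ Finset.range n, (if i < j ∧ (j = c ∧ i ≠ d) then 1 else 0)
      = if i < c ∧ i ≠ d then 1 else 0 := by
  rw [Finset.sum_eq_single c]
  · by_cases hd : i ≠ d <;> simp [hd, and_assoc]
  · intro b _ hbc
    simp [hbc]
  · intro hc
    exact absurd (Finset.mem_range.2 h) hc

lemma sum_ind_lt (n m : ℕ) (h : m ≤ n) :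
    ∑ i ∈ Finset.range n, (if i < m then 1 else 0) = m := by
  rw [← Finset.sum_subset (Finset.range_subset_range.2 h)
      (fun x _ hnx => by rw [if_neg (by simp only [Finset.mem_range] at hnx; omega)])]
  rw [Finset.sum_congr rfl (fun x hx => if_pos (Finset.mem_range.1 hx))]
  simp

lemma sum_ind_lt_ne (n m c : ℕ) (h : m ≤ n) (hc : c < m) :
    ∑ i ∈ Finset.range n, (if i < m ∧ i ≠ c then 1 else 0) = m - 1 := by
  rw [← Finset.sum_subset (Finset.range_subset_range.2 h)
      (fun x _ hnx => by rw [if_neg (by simp only [Finset.mem_range] at hnx; omega)])]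
  have h1 : ∑ i ∈ Finset.range m, (if i = c then 1 else 0) = 1 := by
    rw [Finset.sum_ite_eq' (Finset.range m) c (fun _ => 1)]
    simp [Finset.mem_range.2 hc]
  have h2 : ∑ i ∈ Finset.range m, ((if i < m ∧ i ≠ c then 1 else 0) + (if i = c then 1 else 0)) = m := by
    rw [Finset.sum_congr rfl (fun x hx => ?_), Finset.sum_const, smul_eq_mul, mul_one,
      Finset.card_range]
    have hxm := Finset.mem_range.1 hx
    by_cases hxc : x = c <;> simp [hxc, hxm] <;> omega
  rw [Finset.sum_add_distrib, h1] at h2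
  omega

/-- `ℓ(w_{k,l}) = k + l - 3` for `1 ≤ k < l ≤ n`. -/
theorem stmt0 (n : ℕ) [NeZero n] (hn : 2 ≤ n) (k l : ℕ)
    (hk : 1 ≤ k) (hkl : k < l) (hl : l ≤ n) :
    GU.len n (GU.w n k l) = k + l - 3 := by
  have step : ∀ i j : Fin n,
      (if i < j then
        (Multiplicative.toAdd (GU.w n k l).left ((GU.w n k l).right i) -
          Multiplicative.toAdd (GU.w n k l).left ((GU.w n k l).right j) +
          (if (GU.w n k l).right j < (GU.w n k l).right i then 1 else 0)).natAbs
       else 0)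
      = if (i : ℕ) < (j : ℕ) ∧ ((j : ℕ) = k - 1 ∨ ((j : ℕ) = l - 1 ∧ (i : ℕ) ≠ k - 1))
        then 1 else 0 := by
    intro i j
    rw [w_left]
    simp only [toAdd_ofAdd, GU.mu, Fin.lt_def, pi_val n k l hn hk hkl hl]
    exact term_eval n k l i j hn hk hkl hl i.isLt j.isLt
  rw [GU.len]
  simp only [step]
  rw [Fin.sum_univ_eq_sum_range (fun i => ∑ x_1 : Fin n,
    if i < (x_1:ℕ) ∧ ((x_1:ℕ) = k - 1 ∨ ((x_1:ℕ) = l - 1 ∧ i ≠ k - 1)) then 1 else 0) n]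
  rw [Finset.sum_congr rfl (fun i _ => Fin.sum_univ_eq_sum_range
    (fun j => if (i:ℕ) < j ∧ (j = k - 1 ∨ (j = l - 1 ∧ (i:ℕ) ≠ k - 1)) then 1 else 0) n)]
  have hsplit : ∀ i j : ℕ,
      (if i < j ∧ (j = k - 1 ∨ (j = l - 1 ∧ i ≠ k - 1)) then (1:ℕ) else 0)
      = (if i < j ∧ j = k - 1 then 1 else 0)
        + (if i < j ∧ (j = l - 1 ∧ i ≠ k - 1) then 1 else 0) := by
    intro i j
    split_ifs <;> omega
  simp_rw [hsplit, Finset.sum_add_distrib, inner_sum1 n _ (k-1) (by omega),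
    inner_sum2 n _ (l-1) (k-1) (by omega), sum_ind_lt n (k-1) (by omega),
    sum_ind_lt_ne n (l-1) (k-1) (by omega) (by omega)]
  omega
end

section
/- For 1 ≤ k < l ≤ n, the set Φ_+ \ Φ_{w_{k,l}} equals {χ_{1,n-1}, χ_{2,n-1}, ..., χ_{k-1,n-1}} ∪ {χ_{1,n}, χ_{2,n}, ..., χ_{l-2,n}}, where for w = x t^λ y (λ dominant, t^λ y of minimal length in W_0 t^λ y), Φ_w = {α ∈ Φ_+ : ⟨α,λ⟩ − δ^-(y^{-1}α) + δ^-(xα) = 0}. -/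
open Equiv Multiplicative
open Fin.NatCast

namespace GU
variable (n : ℕ) [NeZero n]

lemma sdesc_eq (a b : ℕ) : sdesc n a b = ⟨1, sfdesc n a b⟩ := by
  show sdesc n a b = SemidirectProduct.inr (sfdesc n a b)
  unfold sdesc sfdesc
  rw [MonoidHom.map_list_prod, List.map_map]
  rfl

lemma w_eq (k l : ℕ) :
    w n k l = ⟨ofAdd (mu n), sfdesc n (n - 2) k * sfdesc n (n - 1) l⟩ := by
  unfold w tW
  rw [sdesc_eq, sdesc_eq]
  ext <;> simp [SemidirectProduct.mul_left, SemidirectProduct.mul_right]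

end GU
namespace GU
variable (n : ℕ) [NeZero n]

lemma sf_apply (i : ℕ) (h1 : 1 ≤ i) (h2 : i ≤ n - 1) (m : Fin n) :
    ((sf n i m : Fin n) : ℕ) =
      if (m : ℕ) = i - 1 then i else if (m : ℕ) = i then i - 1 else m := by
  have hn : 1 ≤ n := Nat.one_le_iff_ne_zero.mpr (NeZero.ne n)
  have hi : i < n := by omega
  have hi1 : i - 1 < n := by omega
  have e1 : ((i - 1 : ℕ) : Fin n).val = i - 1 := by
    rw [Fin.val_natCast, Nat.mod_eq_of_lt (by omega)]
  have e2 : ((i : ℕ) : Fin n).val = i := by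
    rw [Fin.val_natCast, Nat.mod_eq_of_lt (by omega)]
  unfold sf
  rw [Equiv.swap_apply_def]
  simp only [apply_ite Fin.val, Fin.ext_iff, e1, e2]

lemma sfdesc_succ (a b : ℕ) (h : b ≤ a) :
    sfdesc n a b = sfdesc n a (b + 1) * sf n b := by
  unfold sfdesc
  have h1 : a + 1 - b = (a - b) + 1 := by omega
  have h2 : a + 1 - (b + 1) = a - b := by omega
  rw [h1, h2, List.range_succ, List.map_append, List.prod_append]
  simp only [List.map_cons, List.map_nil, List.prod_cons, List.prod_nil, mul_one]
  congr 2
  omega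

lemma sfdesc_last (a : ℕ) : sfdesc n a (a + 1) = 1 := by
  unfold sfdesc
  simp

lemma sfdesc_apply_aux (a : ℕ) (ha : a ≤ n - 1) :
    ∀ d b : ℕ, a + 1 = b + d → 1 ≤ b → ∀ m : Fin n,
    ((sfdesc n a b m : Fin n) : ℕ) =
      if (m : ℕ) + 1 = b then a else
      if b ≤ (m : ℕ) ∧ (m : ℕ) ≤ a then (m : ℕ) - 1 else (m : ℕ) := by
  intro d
  induction d with
  | zero =>
    intro b hb h1 m
    have hb' : b = a + 1 := by omega
    subst hb'
    rw [sfdesc_last]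
    simp only [Equiv.Perm.one_apply]
    have := m.isLt
    split_ifs <;> omega
  | succ d IH =>
    intro b hb h1 m
    have hba : b ≤ a := by omega
    rw [sfdesc_succ n a b hba, Equiv.Perm.mul_apply]
    have hsf := sf_apply n b h1 (by omega) m
    have hih := IH (b + 1) (by omega) (by omega) (sf n b m)
    rw [hsf] at hih
    rw [hih]
    have := m.isLt
    split_ifs <;> omega

lemma sfdesc_apply (a b : ℕ) (ha : a ≤ n - 1) (h1 : 1 ≤ b) (hba : b ≤ a + 1) (m : Fin n) :
    ((sfdesc n a b m : Fin n) : ℕ) =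
      if (m : ℕ) + 1 = b then a else
      if b ≤ (m : ℕ) ∧ (m : ℕ) ≤ a then (m : ℕ) - 1 else (m : ℕ) :=
  sfdesc_apply_aux n a ha (a + 1 - b) b (by omega) h1 m

end GU
namespace GU
variable (n : ℕ) [NeZero n]

lemma v_apply (hn : 2 ≤ n) (k l : ℕ) (hk : 1 ≤ k) (hkl : k < l) (hl : l ≤ n) (m : Fin n) :
    (((sfdesc n (n - 2) k * sfdesc n (n - 1) l) m : Fin n) : ℕ) =
      if (m : ℕ) < k - 1 then (m : ℕ)
      else if (m : ℕ) = k - 1 then n - 2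
      else if (m : ℕ) ≤ l - 2 then (m : ℕ) - 1
      else if (m : ℕ) = l - 1 then n - 1
      else (m : ℕ) - 2 := by
  rw [Equiv.Perm.mul_apply]
  have h2 := sfdesc_apply n (n - 1) l (by omega) (by omega) (by omega) m
  have h1 := sfdesc_apply n (n - 2) k (by omega) (by omega) (by omega)
      ((sfdesc n (n - 1) l) m)
  rw [h2] at h1
  rw [h1]
  have := m.isLt
  split_ifs <;> omega

end GU
namespace GU
variable (n : ℕ) [NeZero n]

lemma lam_eq_mu (hn : 2 ≤ n) (x : Equiv.Perm (Fin n)) (lam : Fin n → ℤ)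
    (hval : ∀ i, lam i = mu n (x i))
    (hdom : ∀ i j : Fin n, i ≤ j → lam j ≤ lam i) :
    lam = mu n := by
  have hmu01 : ∀ t : Fin n, mu n t = -1 ∨ mu n t = 0 := by
    intro t; unfold mu; split <;> simp
  have hneg : ∀ m : Fin n, lam m = -1 ↔ n - 2 ≤ ((x m : Fin n) : ℕ) := by
    intro m; rw [hval]; unfold mu; split <;> simp_all
  have hup : ∀ a b : Fin n, a ≤ b → lam a = -1 → lam b = -1 := by
    intro a b hab ha
    have h1 := hdom a b hab
    rw [hval b] at h1 ⊢
    rcases hmu01 (x b) with h | h <;> omega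
  have key : ∀ m : Fin n, lam m = -1 → n - 2 ≤ (m : ℕ) := by
    intro m hm
    by_contra hc
    push_neg at hc
    have hm2 : (m : ℕ) + 2 ≤ n - 1 := by omega
    set B : Fin n := ⟨(m : ℕ) + 1, by omega⟩ with hB
    set C : Fin n := ⟨(m : ℕ) + 2, by omega⟩ with hC
    have hlB : lam B = -1 := hup m B (by simp [Fin.le_def, hB]) hm
    have hlC : lam C = -1 := hup m C (by simp [Fin.le_def, hC]) hm
    have h1 : n - 2 ≤ ((x m : Fin n) : ℕ) := (hneg m).mp hm
    have h2 : n - 2 ≤ ((x B : Fin n) : ℕ) := (hneg B).mp hlB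
    have h3 : n - 2 ≤ ((x C : Fin n) : ℕ) := (hneg C).mp hlC
    have e1 := (x m).isLt
    have e2 := (x B).isLt
    have e3 := (x C).isLt
    have : ((x m : Fin n) : ℕ) = ((x B : Fin n) : ℕ) ∨
        ((x m : Fin n) : ℕ) = ((x C : Fin n) : ℕ) ∨
        ((x B : Fin n) : ℕ) = ((x C : Fin n) : ℕ) := by omega
    rcases this with h | h | h <;>
      [have := x.injective (Fin.ext h); have := x.injective (Fin.ext h);
       have := x.injective (Fin.ext h)] <;>
      rw [Fin.ext_iff] at this <;> simp [hB, hC] at this <;> omega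
  have rev : ∀ m : Fin n, n - 2 ≤ (m : ℕ) → lam m = -1 := by
    have c1 : ((n - 2 : ℕ) : Fin n).val = n - 2 := by
      rw [Fin.val_natCast, Nat.mod_eq_of_lt (by omega)]
    have c2 : ((n - 1 : ℕ) : Fin n).val = n - 1 := by
      rw [Fin.val_natCast, Nat.mod_eq_of_lt (by omega)]
    set i1 := x.symm ((n - 2 : ℕ) : Fin n) with hi1
    set i2 := x.symm ((n - 1 : ℕ) : Fin n) with hi2
    have hl1 : lam i1 = -1 := by rw [hneg, hi1, Equiv.apply_symm_apply, c1]
    have hl2 : lam i2 = -1 := by rw [hneg, hi2, Equiv.apply_symm_apply, c2]; omega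
    have k1 : n - 2 ≤ (i1 : ℕ) := key i1 hl1
    have k2 : n - 2 ≤ (i2 : ℕ) := key i2 hl2
    have hne : (i1 : ℕ) ≠ (i2 : ℕ) := by
      intro h
      have := x.symm.injective (a₁ := ((n - 2 : ℕ) : Fin n))
        (a₂ := ((n - 1 : ℕ) : Fin n)) (Fin.ext h)
      rw [Fin.ext_iff, c1, c2] at this
      omega
    intro m hm
    have e1 := i1.isLt
    have e2 := i2.isLt
    rcases Nat.lt_or_ge (i1 : ℕ) (i2 : ℕ) with h | h
    · exact hup i1 m (by rw [Fin.le_def]; omega) hl1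
    · exact hup i2 m (by rw [Fin.le_def]; omega) hl2
  funext m
  unfold mu
  split
  · exact rev m (by assumption)
  · rcases hmu01 (x m) with h | h <;> rw [hval]
    · exact absurd (key m (by rw [hval]; exact h)) (by assumption)
    · exact h

end GU
namespace GU
variable (n : ℕ) [NeZero n]

lemma perm_unique (f : Fin n → ℤ) (v y : Equiv.Perm (Fin n))
    (hblock : ∀ m, f (y m) = f (v m))
    (hy : ∀ i j : Fin n, i < j → f (y i) = f (y j) → y i < y j)
    (hv : ∀ i j : Fin n, i < j → f (v i) = f (v j) → v i < v j) :
    y = v := by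
  have count : ∀ (r : Equiv.Perm (Fin n)), (∀ m, f (r m) = f (v m)) →
      (∀ i j : Fin n, i < j → f (r i) = f (r j) → r i < r j) →
      ∀ b : Fin n,
      (Finset.univ.filter (fun m => f (v m) = f b ∧ m < r.symm b)).card
        = (Finset.univ.filter (fun c => f c = f b ∧ c < b)).card := by
    intro r hbr hr b
    apply Finset.card_bij (fun m _ => r m)
    · intro m hm
      simp only [Finset.mem_filter, Finset.mem_univ, true_and] at hm ⊢
      constructor
      · rw [hbr] at *; exact hm.1
      · have : r m < r (r.symm b) := hr m (r.symm b) hm.2 (by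
          rw [Equiv.apply_symm_apply, hbr]; exact hm.1)
        rwa [Equiv.apply_symm_apply] at this
    · intro a _ a' _ h
      exact r.injective h
    · intro c hc
      simp only [Finset.mem_filter, Finset.mem_univ, true_and] at hc
      refine ⟨r.symm c, ?_, by rw [Equiv.apply_symm_apply]⟩
      simp only [Finset.mem_filter, Finset.mem_univ, true_and]
      constructor
      · rw [← hbr, Equiv.apply_symm_apply]; exact hc.1
      · rcases lt_trichotomy (r.symm c) (r.symm b) with h | h | h
        · exact h
        · exact absurd (r.symm.injective h ▸ hc.2) (lt_irrefl _)
        · have := hr (r.symm b) (r.symm c) h (by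
            rw [Equiv.apply_symm_apply, Equiv.apply_symm_apply, hc.1])
          rw [Equiv.apply_symm_apply, Equiv.apply_symm_apply] at this
          exact absurd (lt_trans this hc.2) (lt_irrefl _)
  have hsymm : ∀ b : Fin n, y.symm b = v.symm b := by
    intro b
    by_contra hne
    have hcy := count y hblock hy b
    have hcv := count v (fun _ => rfl) hv b
    have hlt : ∀ p q : Fin n, p < q → f (v p) = f b → f (v q) = f b →
        (Finset.univ.filter (fun m => f (v m) = f b ∧ m < p)).card
          < (Finset.univ.filter (fun m => f (v m) = f b ∧ m < q)).card := by
      intro p q hpq hp hq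
      apply Finset.card_lt_card
      constructor
      · intro m hm
        simp only [Finset.mem_filter, Finset.mem_univ, true_and] at hm ⊢
        exact ⟨hm.1, lt_trans hm.2 hpq⟩
      · intro hsub
        have := hsub (by
          simp only [Finset.mem_filter, Finset.mem_univ, true_and]
          exact ⟨hp, hpq⟩ : p ∈ _)
        simp only [Finset.mem_filter, Finset.mem_univ, true_and] at this
        exact absurd this.2 (lt_irrefl _)
    have hpy : f (v (y.symm b)) = f b := by rw [← hblock, Equiv.apply_symm_apply]
    have hpv : f (v (v.symm b)) = f b := by rw [Equiv.apply_symm_apply]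
    rcases lt_trichotomy (y.symm b) (v.symm b) with h | h | h
    · have := hlt _ _ h hpy hpv
      omega
    · exact hne h
    · have := hlt _ _ h hpv hpy
      omega
  have h1 : y.symm = v.symm := Equiv.ext hsymm
  have h2 := congrArg Equiv.symm h1
  simpa using h2

end GU
set_option maxHeartbeats 2000000 in
/-- `Φ₊ \ Φ_{w_{k,l}} = {χ_{i,n-1} : i ≤ k-1} ∪ {χ_{i,n} : i ≤ l-2}` (1-based). -/
theorem stmt2 (n : ℕ) [NeZero n] (hn : 2 ≤ n) (k l : ℕ)
    (hk : 1 ≤ k) (hkl : k < l) (hl : l ≤ n)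
    (x y : Equiv.Perm (Fin n)) (lam : Fin n → ℤ)
    (hdec : GU.w n k l = (⟨1, x⟩ : GU.Wt n) * GU.tW n lam * (⟨1, y⟩ : GU.Wt n))
    (hdom : ∀ i j : Fin n, i ≤ j → lam j ≤ lam i)
    (hmin : GU.minimalInCoset n (GU.tW n lam * (⟨1, y⟩ : GU.Wt n))) :
    {p : Fin n × Fin n | p.1 < p.2 ∧
      ¬((lam p.1 - lam p.2) - (if y⁻¹ p.2 < y⁻¹ p.1 then 1 else 0)
          + (if x p.2 < x p.1 then 1 else 0) = 0)} =
    {p : Fin n × Fin n | p.1 < p.2 ∧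
      ((p.2 = ((n - 2 : ℕ) : Fin n) ∧ (p.1 : ℕ) + 1 ≤ k - 1) ∨
       (p.2 = ((n - 1 : ℕ) : Fin n) ∧ (p.1 : ℕ) + 1 ≤ l - 2))} := by
  set v : Equiv.Perm (Fin n) := GU.sfdesc n (n - 2) k * GU.sfdesc n (n - 1) l with hv
  rw [GU.w_eq] at hdec
  have hr : v = x * y := by
    have := congrArg SemidirectProduct.right hdec
    simpa [GU.tW, SemidirectProduct.mul_right] using this
  have hlft : ofAdd (GU.mu n) = GU.permHom n x (ofAdd lam) := by
    have := congrArg SemidirectProduct.left hdec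
    simpa [GU.tW, SemidirectProduct.mul_left, SemidirectProduct.mul_right] using this
  have hmuval : ∀ i, GU.mu n i = lam (x.symm i) := fun i =>
    congrFun (congrArg toAdd hlft) i
  have hval : ∀ i, lam i = GU.mu n (x i) := by
    intro i
    rw [hmuval (x i), Equiv.symm_apply_apply]
  have hlam : lam = GU.mu n := GU.lam_eq_mu n hn x lam hval hdom
  have hmux : ∀ i, GU.mu n (x i) = GU.mu n i := by
    intro i; rw [← hval i, hlam]
  have hmuxs : ∀ i, GU.mu n (x.symm i) = GU.mu n i := by
    intro i
    have := hmux (x.symm i)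
    rw [Equiv.apply_symm_apply] at this
    exact this.symm
  have hty : GU.tW n lam * (⟨1, y⟩ : GU.Wt n) = ⟨ofAdd (GU.mu n), y⟩ := by
    rw [hlam]
    ext
    · simp [GU.tW, SemidirectProduct.mul_left]
    · simp [GU.tW, SemidirectProduct.mul_right]
  have hconj : (⟨1, x⟩ : GU.Wt n) * ⟨ofAdd (GU.mu n), y⟩ = ⟨ofAdd (GU.mu n), v⟩ := by
    ext
    · simp only [SemidirectProduct.mul_left, one_mul]
      exact hmuxs _
    · simp [SemidirectProduct.mul_right, hr]
  have hmlen : GU.len n ⟨ofAdd (GU.mu n), y⟩ ≤ GU.len n ⟨ofAdd (GU.mu n), v⟩ := by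
    have := hmin x
    rwa [hty, hconj] at this
  have hVval := fun m => GU.v_apply n hn k l hk hkl hl m
  rw [← hv] at hVval
  have hVnoinv : ∀ i j : Fin n, i < j → GU.mu n (v i) = GU.mu n (v j) → v i < v j := by
    intro i j hij hmueq
    have Vi := hVval i
    have Vj := hVval j
    have hiv := (v i).isLt
    have hjv := (v j).isLt
    have hij' : (i : ℕ) < (j : ℕ) := hij
    have hji := j.isLt
    unfold GU.mu at hmueq
    rw [Fin.lt_def]
    split_ifs at hmueq Vi Vj <;> omega
  set T : Equiv.Perm (Fin n) → Fin n → Fin n → ℕ := fun r i j =>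
    if i < j then
      (GU.mu n (r i) - GU.mu n (r j) + if r j < r i then 1 else 0).natAbs
    else 0 with hT
  have hlen : ∀ r : Equiv.Perm (Fin n),
      GU.len n ⟨ofAdd (GU.mu n), r⟩ = ∑ i : Fin n, ∑ j : Fin n, T r i j := fun r => rfl
  have hby : ∀ m, GU.mu n (y m) = GU.mu n (v m) := by
    intro m
    have : y m = x.symm (v m) := by rw [hr]; simp
    rw [this, hmuxs]
  have hmu01 : ∀ t : Fin n, (GU.mu n t = -1 ∧ n - 2 ≤ (t : ℕ)) ∨
      (GU.mu n t = 0 ∧ (t : ℕ) < n - 2) := by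
    intro t; unfold GU.mu; split_ifs with h
    · exact Or.inl ⟨rfl, h⟩
    · exact Or.inr ⟨rfl, by omega⟩
  have hTle : ∀ i j : Fin n, T v i j ≤ T y i j := by
    intro i j
    rw [hT]
    simp only [Fin.lt_def]
    by_cases hij : (i : ℕ) < (j : ℕ)
    · rw [if_pos hij, if_pos hij]
      have hvo : GU.mu n (v i) = GU.mu n (v j) → ¬ ((v j : ℕ) < (v i : ℕ)) := by
        intro hh1 hh2
        have := hVnoinv i j hij hh1
        rw [Fin.lt_def] at this
        omega
      have g1 := hby i
      have g2 := hby j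
      have m1 := hmu01 (v i)
      have m2 := hmu01 (v j)
      have m3 := hmu01 (y i)
      have m4 := hmu01 (y j)
      have hvo' : ¬ ((v j : ℕ) < (v i : ℕ)) ∨ GU.mu n (v i) ≠ GU.mu n (v j) := by
        by_cases hq : GU.mu n (v i) = GU.mu n (v j)
        · exact Or.inl (hvo hq)
        · exact Or.inr hq
      split_ifs <;> omega
    · rw [if_neg hij, if_neg hij]
  have hsumeq : ∑ i : Fin n, ∑ j : Fin n, T v i j = ∑ i : Fin n, ∑ j : Fin n, T y i j := by
    have h1 : ∑ i : Fin n, ∑ j : Fin n, T v i j ≤ ∑ i : Fin n, ∑ j : Fin n, T y i j :=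
      Finset.sum_le_sum (fun i _ => Finset.sum_le_sum (fun j _ => hTle i j))
    rw [hlen y, hlen v] at hmlen
    omega
  have hTeq : ∀ i j : Fin n, T v i j = T y i j := by
    have houter := (Finset.sum_eq_sum_iff_of_le
      (fun i (_ : i ∈ Finset.univ) => Finset.sum_le_sum
        (fun j (_ : j ∈ Finset.univ) => hTle i j))).mp hsumeq
    intro i j
    exact (Finset.sum_eq_sum_iff_of_le (fun j (_ : j ∈ Finset.univ) => hTle i j)).mp
      (houter i (Finset.mem_univ i)) j (Finset.mem_univ j)
  have hYnoinv : ∀ i j : Fin n, i < j → GU.mu n (y i) = GU.mu n (y j) → y i < y j := by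
    intro i j hij hme
    have hveq : GU.mu n (v i) = GU.mu n (v j) := by rw [← hby, ← hby, hme]
    have hnv : ¬ (v j < v i) := asymm (hVnoinv i j hij hveq)
    have ht := hTeq i j
    rw [hT] at ht
    simp only [if_pos hij] at ht
    rw [if_neg hnv, hveq, hme] at ht
    have hne : y i ≠ y j := fun hc => absurd (y.injective hc) (ne_of_lt hij)
    rcases lt_or_gt_of_ne hne with h | h
    · exact h
    · exfalso
      rw [if_pos h] at ht
      omega
  have hyv : y = v := GU.perm_unique n (GU.mu n) v y hby hYnoinv hVnoinv
  have hx1 : x = 1 := by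
    have h2 := hr
    rw [hyv] at h2
    have h1 : (1 : Equiv.Perm (Fin n)) * v = x * v := by rw [one_mul]; exact h2
    exact (mul_right_cancel h1).symm
  have c1 : ((n - 2 : ℕ) : Fin n).val = n - 2 := by
    rw [Fin.val_natCast, Nat.mod_eq_of_lt (by omega)]
  have c2 : ((n - 1 : ℕ) : Fin n).val = n - 1 := by
    rw [Fin.val_natCast, Nat.mod_eq_of_lt (by omega)]
  subst hlam
  subst hx1
  ext p
  obtain ⟨i, j⟩ := p
  simp only [Set.mem_setOf_eq]
  refine and_congr_right fun hij => ?_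
  rw [hyv]
  have hxifz : (if (1 : Equiv.Perm (Fin n)) j < (1 : Equiv.Perm (Fin n)) i then (1 : ℤ) else 0) = 0 := by
    simp only [Equiv.Perm.one_apply]
    exact if_neg (asymm hij)
  rw [hxifz, add_zero]
  set a := v⁻¹ i with ha
  set b := v⁻¹ j with hb
  have hva : v a = i := by rw [ha]; simp
  have hvb : v b = j := by rw [hb]; simp
  have hia := hVval a
  rw [hva] at hia
  have hib := hVval b
  rw [hvb] at hib
  have e1 : (j = ((n - 2 : ℕ) : Fin n)) ↔ (j : ℕ) = n - 2 := by
    rw [Fin.ext_iff, c1]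
  have e2 : (j = ((n - 1 : ℕ) : Fin n)) ↔ (j : ℕ) = n - 1 := by
    rw [Fin.ext_iff, c2]
  rw [e1, e2]
  simp only [Fin.lt_def]
  unfold GU.mu
  have hij' : (i : ℕ) < (j : ℕ) := hij
  have hai := a.isLt
  have hbi := b.isLt
  have hjn := j.isLt
  split_ifs at hia hib ⊢ <;> omega
end

section
/- For odd k with 3 ≤ k ≤ (n-1)/2, S(w_{k,k+1},σ) = {s_i : k ≤ i ≤ n-k-2} ∪ {s_1, s_3, ..., s_{k-2}} ∪ {s_{n-1}, s_{n-3}, ..., s_{n-k}}; for even k with 2 ≤ k ≤ n/2, S(w_{k,k+1},σ) = {s_i : k ≤ i ≤ n-k-2}. -/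
open Equiv Multiplicative

namespace GUaux
open GU Equiv Multiplicative

variable {n : ℕ} [NeZero n]

open Fin.NatCast in
lemma cast_mk {j : ℕ} (h : j < n) : (j : Fin n) = ⟨j, h⟩ :=
  Fin.ext (by simp [Fin.val_natCast, Nat.mod_eq_of_lt h])

lemma sf_eq {i : ℕ} (h1 : 1 ≤ i) (h2 : i < n) :
    sf n i = Equiv.swap ⟨i - 1, by omega⟩ ⟨i, h2⟩ := by
  rw [sf, cast_mk (by omega : i - 1 < n), cast_mk h2]

lemma sW_eq {i : ℕ} (h1 : 1 ≤ i) (h2 : i < n) :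
    sW n i = ⟨1, Equiv.swap ⟨i - 1, by omega⟩ ⟨i, h2⟩⟩ := by
  rw [sW, sf_eq h1 h2]

lemma prod_sW (L : List ℕ) (g : ℕ → ℕ) :
    ((L.map fun j => sW n (g j)).prod : Wt n) = ⟨1, (L.map fun j => sf n (g j)).prod⟩ := by
  induction L with
  | nil => rfl
  | cons a t ih =>
    simp only [List.map_cons, List.prod_cons, ih]
    ext
    · simp [sW, SemidirectProduct.mul_left]
    · simp [sW, SemidirectProduct.mul_right]

lemma sdesc_eq (a b : ℕ) : sdesc n a b = ⟨1, sfdesc n a b⟩ := by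
  rw [sdesc, sfdesc]; exact prod_sW _ _

end GUaux
namespace GUaux
open GU Equiv Multiplicative

variable {n : ℕ} [NeZero n]

lemma mkeq {a b : ℕ} {ha : a < n} {hb : b < n} (h : a = b) : (⟨a, ha⟩ : Fin n) = ⟨b, hb⟩ := by
  subst h; rfl

lemma mkne {a b : ℕ} {ha : a < n} {hb : b < n} (h : a ≠ b) : (⟨a, ha⟩ : Fin n) ≠ ⟨b, hb⟩ :=
  fun hh => h (by injection hh)

lemma swap_mk {a b c : ℕ} (ha : a < n) (hb : b < n) (hc : c < n) :
    Equiv.swap (⟨a, ha⟩ : Fin n) ⟨b, hb⟩ ⟨c, hc⟩ =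
      if c = a then ⟨b, hb⟩ else if c = b then ⟨a, ha⟩ else ⟨c, hc⟩ := by
  split_ifs with h1 h2
  · rw [mkeq (hb := ha) h1, Equiv.swap_apply_left]
  · rw [mkeq (hb := hb) h2, Equiv.swap_apply_right]
  · exact Equiv.swap_apply_of_ne_of_ne (mkne h1) (mkne h2)

lemma sfdesc_single (a : ℕ) : sfdesc n a a = sf n a := by
  rw [sfdesc]
  rw [show a + 1 - a = 1 by omega]
  simp [List.range_succ]

lemma sfdesc_cons (a b : ℕ) (hb : 1 ≤ b) (h : b ≤ a) :
    sfdesc n a b = sf n a * sfdesc n (a - 1) b := by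
  rw [sfdesc, sfdesc]
  have e : a + 1 - b = (a - 1 + 1 - b) + 1 := by omega
  rw [e, List.range_succ_eq_map, List.map_cons, List.prod_cons, List.map_map]
  simp only [Nat.sub_zero]
  congr 2
  apply List.map_congr_left
  intro j _
  simp only [Function.comp_apply]
  congr 1
  omega

lemma sfdesc_apply (b d : ℕ) (hb : 1 ≤ b) (hd : b + d < n) {j : ℕ} (hj : j < n) :
    sfdesc n (b + d) b ⟨j, hj⟩ =
      if j = b - 1 then ⟨b + d, hd⟩
      else if b ≤ j ∧ j ≤ b + d then ⟨j - 1, by omega⟩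
      else ⟨j, hj⟩ := by
  induction d generalizing j with
  | zero =>
    have e : sfdesc n (b + 0) b = sf n b := by rw [Nat.add_zero, sfdesc_single]
    rw [e, sf_eq hb (by omega), swap_mk]
    split_ifs <;> first | (apply mkeq; omega) | omega | rfl
  | succ d ih =>
    have e : sfdesc n (b + (d + 1)) b = sf n (b + (d + 1)) * sfdesc n (b + d) b :=
      sfdesc_cons _ _ hb (by omega)
    rw [e, Equiv.Perm.mul_apply, ih (by omega) hj, sf_eq (by omega) hd]
    split_ifs with h1 h2 h3 <;>
      rw [swap_mk] <;>
      split_ifs <;> first | (apply mkeq; omega) | omega | rfl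

end GUaux
namespace GUaux
open GU Equiv Multiplicative

variable {n k : ℕ} [NeZero n]

lemma sfdesc_apply' (b a : ℕ) (hb : 1 ≤ b) (hba : b ≤ a) (ha : a < n) {j : ℕ} (hj : j < n) :
    sfdesc n a b ⟨j, hj⟩ =
      if j = b - 1 then ⟨a, ha⟩
      else if b ≤ j ∧ j ≤ a then ⟨j - 1, by omega⟩
      else ⟨j, hj⟩ := by
  obtain ⟨d, rfl⟩ : ∃ d, a = b + d := ⟨a - b, by omega⟩
  exact sfdesc_apply b d hb ha hj

/-- The finite part of `w_{k,k+1}`. -/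
def uu (n k : ℕ) [NeZero n] : Equiv.Perm (Fin n) :=
  sfdesc n (n - 2) k * sfdesc n (n - 1) (k + 1)

lemma uu_apply (hn : 4 ≤ n) (hk : 2 ≤ k) (hkn : 2 * k ≤ n) {j : ℕ} (hj : j < n) :
    uu n k ⟨j, hj⟩ =
      if j ≤ k - 2 then ⟨j, hj⟩
      else if j = k - 1 then ⟨n - 2, by omega⟩
      else if j = k then ⟨n - 1, by omega⟩
      else ⟨j - 2, by omega⟩ := by
  rw [uu, Equiv.Perm.mul_apply, sfdesc_apply' (k + 1) (n - 1) (by omega) (by omega) (by omega) hj]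
  rw [show k + 1 - 1 = k by omega]
  split_ifs with c1 c2 c3 c4 <;>
    rw [sfdesc_apply' k (n - 2) (by omega) (by omega) (by omega)] <;>
    split_ifs <;> first | (apply mkeq; omega) | omega | rfl

lemma w_eq (hn : 4 ≤ n) (hk : 2 ≤ k) (hkn : 2 * k ≤ n) :
    w n k (k + 1) = ⟨ofAdd (mu n), uu n k⟩ := by
  rw [w, tW, sdesc_eq, sdesc_eq, uu]
  apply SemidirectProduct.ext
  · show (_ : Multiplicative (Fin n → ℤ)) = _
    simp [SemidirectProduct.mul_left]
  · simp [SemidirectProduct.mul_right]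

lemma sigma_sW {i : ℕ} (h1 : 1 ≤ i) (h2 : i ≤ n - 1) (hn : 4 ≤ n) :
    sigma n (sW n i) = sW n (n - i) := by
  rw [sW_eq h1 (by omega), sW_eq (show 1 ≤ n - i by omega) (by omega), sigma]
  apply SemidirectProduct.ext
  · show ofAdd (fun j => -toAdd (1 : Multiplicative (Fin n → ℤ)) j.rev) = (1 : Multiplicative (Fin n → ℤ))
    simp only [toAdd_one, Pi.zero_apply, neg_zero]
    rfl
  · show Fin.revPerm * Equiv.swap _ _ * Fin.revPerm = _
    rw [show (Fin.revPerm * Equiv.swap (⟨i-1, by omega⟩ : Fin n) ⟨i, by omega⟩ * Fin.revPerm : Equiv.Perm (Fin n))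
        = Fin.revPerm * Equiv.swap (⟨i-1, by omega⟩ : Fin n) ⟨i, by omega⟩ * Fin.revPerm⁻¹ by rfl]
    rw [← Equiv.swap_apply_apply]
    have e1 : Fin.revPerm (⟨i - 1, by omega⟩ : Fin n) = ⟨n - i, by omega⟩ := by
      apply Fin.ext
      rw [Fin.revPerm_apply, Fin.val_rev]
      show n - (i - 1 + 1) = n - i
      omega
    have e2 : Fin.revPerm (⟨i, by omega⟩ : Fin n) = ⟨n - i - 1, by omega⟩ := by
      apply Fin.ext
      rw [Fin.revPerm_apply, Fin.val_rev]
      show n - (i + 1) = n - i - 1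
      omega
    rw [e1, e2, Equiv.swap_comm]

end GUaux
namespace GUaux
open GU Equiv Multiplicative

variable {n k : ℕ} [NeZero n]

lemma conj_swap (f : Fin n → ℤ) (u : Equiv.Perm (Fin n)) (a b : Fin n) :
    (⟨ofAdd f, u⟩ : Wt n) * ⟨1, Equiv.swap a b⟩ * (⟨ofAdd f, u⟩ : Wt n)⁻¹ =
      ⟨ofAdd (fun t => f t - f (Equiv.swap (u a) (u b) t)), Equiv.swap (u a) (u b)⟩ := by
  have hq : u * Equiv.swap a b * u⁻¹ = Equiv.swap (u a) (u b) := (Equiv.swap_apply_apply u a b).symm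
  apply SemidirectProduct.ext
  · show (_ : Multiplicative (Fin n → ℤ)) = _
    rw [SemidirectProduct.mul_left, SemidirectProduct.mul_left, SemidirectProduct.inv_left]
    show ofAdd f * (permHom n) u 1 * (permHom n) (u * Equiv.swap a b) ((permHom n) u⁻¹ (ofAdd f)⁻¹) = _
    rw [map_one, mul_one, ← MulAut.mul_apply, ← map_mul]
    rw [hq]
    have e : ((permHom n) (Equiv.swap (u a) (u b))) (ofAdd f)⁻¹ =
        ofAdd (fun t => - f (Equiv.swap (u a) (u b) t)) := by
      show ofAdd (fun t => toAdd (ofAdd f)⁻¹ ((Equiv.swap (u a) (u b)).symm t)) = _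
      rw [Equiv.symm_swap]
      rfl
    rw [e]
    rfl
  · show u * Equiv.swap a b * u⁻¹ = _
    exact hq

lemma mu_mk {a : ℕ} (ha : a < n) : mu n ⟨a, ha⟩ = if n - 2 ≤ a then -1 else 0 := rfl

lemma ofAdd_mu_eq_one (A B : Fin n) :
    (ofAdd (fun t => mu n t - mu n (Equiv.swap A B t)) : Multiplicative (Fin n → ℤ)) = 1 ↔
      mu n A = mu n B := by
  constructor
  · intro h
    have h2 : (fun t => mu n t - mu n (Equiv.swap A B t)) = (0 : Fin n → ℤ) :=
      ofAdd_eq_one.mp h  -- maybe wrong lemma name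
    have h3 := congrFun h2 A
    simp only [Pi.zero_apply, Equiv.swap_apply_left] at h3
    omega
  · intro h
    rw [show (1 : Multiplicative (Fin n → ℤ)) = ofAdd 0 from rfl]
    congr 1
    funext t
    rcases eq_or_ne t A with rfl | hA
    · simp [Equiv.swap_apply_left, h]
    rcases eq_or_ne t B with rfl | hB
    · simp [Equiv.swap_apply_right, h]
    · simp [Equiv.swap_apply_of_ne_of_ne hA hB]

lemma swap_eq_swap_iff {α : Type*} [DecidableEq α] {a b c d : α} (hab : a ≠ b) (hcd : c ≠ d) :
    Equiv.swap a b = Equiv.swap c d ↔ (a = c ∧ b = d) ∨ (a = d ∧ b = c) := by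
  constructor
  · intro h
    have ha : Equiv.swap c d a = b := by rw [← h, Equiv.swap_apply_left]
    rcases eq_or_ne a c with h1 | h1
    · exact Or.inl ⟨h1, by rw [← ha, h1, Equiv.swap_apply_left]⟩
    rcases eq_or_ne a d with h2 | h2
    · exact Or.inr ⟨h2, by rw [← ha, h2, Equiv.swap_apply_right]⟩
    · exact absurd ((Equiv.swap_apply_of_ne_of_ne h1 h2).symm.trans ha) hab
  · rintro (⟨rfl, rfl⟩ | ⟨rfl, rfl⟩)
    · rfl
    · exact Equiv.swap_comm _ _

end GUaux
namespace GUaux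
open GU Equiv Multiplicative

variable {n k : ℕ} [NeZero n]

/-- The domain where `Ad(w)σ` sends a finite simple reflection to a finite simple reflection. -/
def Dp (n k i : ℕ) : Prop :=
  (1 ≤ i ∧ i ≤ n - k - 2) ∨ i = n - k ∨ (n - k + 2 ≤ i ∧ i ≤ n - 1)

/-- The induced index map. -/
def phi (n k i : ℕ) : ℕ :=
  if i ≤ n - k - 2 then n - 2 - i else if i = n - k then n - 1 else n - i

lemma uu_mk (hn : 4 ≤ n) (hk : 2 ≤ k) (hkn : 2 * k ≤ n) {x a : ℕ} (hx : x < n) (ha : a < n)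
    (h : (x ≤ k - 2 ∧ a = x) ∨ (x = k - 1 ∧ a = n - 2) ∨ (x = k ∧ a = n - 1) ∨
      (k + 1 ≤ x ∧ a = x - 2)) :
    uu n k ⟨x, hx⟩ = ⟨a, ha⟩ := by
  rw [uu_apply hn hk hkn]
  split_ifs <;> (apply mkeq; omega)

set_option maxHeartbeats 1600000 in
lemma f_iff (hn : 4 ≤ n) (hk : 2 ≤ k) (hkn : 2 * k ≤ n) {i j : ℕ}
    (hi1 : 1 ≤ i) (hi2 : i ≤ n - 1) (hj1 : 1 ≤ j) (hj2 : j ≤ n - 1) :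
    w n k (k + 1) * sigma n (sW n i) * (w n k (k + 1))⁻¹ = sW n j ↔
      (Dp n k i ∧ j = phi n k i) := by
  have hj1' : j - 1 < n := by omega
  have hjn : j < n := by omega
  rw [sigma_sW hi1 hi2 hn, w_eq hn hk hkn,
    sW_eq (show 1 ≤ n - i by omega) (show n - i < n by omega), conj_swap,
    sW_eq hj1 (show j < n by omega)]
  have key : ∀ (A B : Fin n) (hAB : A ≠ B),
      (⟨ofAdd (fun t => mu n t - mu n (Equiv.swap A B t)), Equiv.swap A B⟩ : Wt n) =
        ⟨1, Equiv.swap ⟨j - 1, hj1'⟩ ⟨j, hjn⟩⟩ ↔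
      (mu n A = mu n B ∧
        ((A = (⟨j - 1, hj1'⟩ : Fin n) ∧ B = (⟨j, hjn⟩ : Fin n)) ∨
         (A = (⟨j, hjn⟩ : Fin n) ∧ B = (⟨j - 1, hj1'⟩ : Fin n)))) := by
    intro A B hAB
    constructor
    · intro h
      have hl := congrArg SemidirectProduct.left h
      have hr := congrArg SemidirectProduct.right h
      simp only at hl hr
      exact ⟨(ofAdd_mu_eq_one A B).mp hl, (swap_eq_swap_iff hAB (mkne (by omega))).mp hr⟩
    · rintro ⟨h1, h2⟩
      have hr : Equiv.swap A B = Equiv.swap (⟨j - 1, hj1'⟩ : Fin n) ⟨j, hjn⟩ := by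
        rcases h2 with ⟨e1, e2⟩ | ⟨e1, e2⟩
        · subst e1; subst e2; rfl
        · subst e1; subst e2; exact Equiv.swap_comm _ _
      have hl : (ofAdd (fun t => mu n t - mu n (Equiv.swap A B t)) :
          Multiplicative (Fin n → ℤ)) = 1 := (ofAdd_mu_eq_one A B).mpr h1
      rw [hr] at hl ⊢
      rw [hl]
  rw [key _ _ ?hab]
  case hab =>
    rw [uu_apply hn hk hkn, uu_apply hn hk hkn]
    split_ifs <;> exact mkne (by omega)
  have hx1 : n - i - 1 < n := by omega
  have hx2 : n - i < n := by omega
  rcases (show (n - i ≤ k - 2) ∨ (n - i = k - 1) ∨ (n - i = k) ∨ (n - i = k + 1) ∨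
      (k + 2 ≤ n - i) by omega) with hc | hc | hc | hc | hc
  · rw [uu_mk hn hk hkn hx1 (show n - i - 1 < n by omega) (Or.inl ⟨by omega, rfl⟩),
      uu_mk hn hk hkn hx2 (show n - i < n by omega) (Or.inl ⟨by omega, rfl⟩)]
    simp only [mu_mk, Fin.mk.injEq, Dp, phi]
    split_ifs <;> omega
  · rw [uu_mk hn hk hkn hx1 (show n - i - 1 < n by omega) (Or.inl ⟨by omega, rfl⟩),
      uu_mk hn hk hkn hx2 (show n - 2 < n by omega) (Or.inr (Or.inl ⟨by omega, rfl⟩))]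
    simp only [mu_mk, Fin.mk.injEq, Dp, phi]
    split_ifs <;> omega
  · rw [uu_mk hn hk hkn hx1 (show n - 2 < n by omega) (Or.inr (Or.inl ⟨by omega, rfl⟩)),
      uu_mk hn hk hkn hx2 (show n - 1 < n by omega) (Or.inr (Or.inr (Or.inl ⟨by omega, rfl⟩)))]
    simp only [mu_mk, Fin.mk.injEq, Dp, phi]
    split_ifs <;> omega
  · rw [uu_mk hn hk hkn hx1 (show n - 1 < n by omega) (Or.inr (Or.inr (Or.inl ⟨by omega, rfl⟩))),
      uu_mk hn hk hkn hx2 (show n - i - 2 < n by omega) (Or.inr (Or.inr (Or.inr ⟨by omega, by omega⟩)))]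
    simp only [mu_mk, Fin.mk.injEq, Dp, phi]
    split_ifs <;> omega
  · rw [uu_mk hn hk hkn hx1 (show n - i - 3 < n by omega) (Or.inr (Or.inr (Or.inr ⟨by omega, by omega⟩))),
      uu_mk hn hk hkn hx2 (show n - i - 2 < n by omega) (Or.inr (Or.inr (Or.inr ⟨by omega, by omega⟩)))]
    simp only [mu_mk, Fin.mk.injEq, Dp, phi]
    split_ifs <;> omega

end GUaux
namespace GUaux
open GU Equiv Multiplicative

variable {n k : ℕ} [NeZero n]

lemma escape1 (hn : 4 ≤ n) (hk : 2 ≤ k) (hkn : 2 * k ≤ n) (J : Set ℕ)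
    (hJD : ∀ i ∈ J, Dp n k i) (hJphi : ∀ i ∈ J, phi n k i ∈ J) :
    ∀ c i, i ∈ J → 1 ≤ i → i ≤ k - 1 → i % 2 = (k - 1) % 2 → k - 1 - i ≤ c → False := by
  intro c
  induction c with
  | zero =>
    intro i hi h1 h2 h3 h4
    have hiD := hJD i hi
    simp only [Dp] at hiD
    have hple : i ≤ n - k - 2 := by omega
    have hphi : phi n k i = n - 2 - i := by simp only [phi]; rw [if_pos hple]
    have h2J : n - 2 - i ∈ J := hphi ▸ hJphi i hi
    have h2D := hJD _ h2J
    simp only [Dp] at h2D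
    omega
  | succ c ih =>
    intro i hi h1 h2 h3 h4
    have hiD := hJD i hi
    simp only [Dp] at hiD
    have hple : i ≤ n - k - 2 := by omega
    have hphi : phi n k i = n - 2 - i := by simp only [phi]; rw [if_pos hple]
    have h2J : n - 2 - i ∈ J := hphi ▸ hJphi i hi
    have h2D := hJD _ h2J
    simp only [Dp] at h2D
    rcases (show i = k - 1 ∨ i = k - 3 ∨ (i ≤ k - 5 ∧ 1 ≤ i) by omega) with hc | hc | hc
    · omega
    · omega
    · have hphi2 : phi n k (n - 2 - i) = i + 2 := by
        simp only [phi]; split_ifs <;> omega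
      have h3J : i + 2 ∈ J := hphi2 ▸ hJphi _ h2J
      exact ih (i + 2) h3J (by omega) (by omega) (by omega) (by omega)

lemma escape2 (hn : 4 ≤ n) (hk : 2 ≤ k) (hkn : 2 * k ≤ n) (hke : k % 2 = 0) (J : Set ℕ)
    (hJD : ∀ i ∈ J, Dp n k i) (hJphi : ∀ i ∈ J, phi n k i ∈ J) :
    ∀ c i, i ∈ J → 1 ≤ i → i ≤ k - 1 → i % 2 = k % 2 → k - 1 - i ≤ c → False := by
  intro c
  induction c with
  | zero => intro i hi h1 h2 h3 h4; omega
  | succ c ih =>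
    intro i hi h1 h2 h3 h4
    have hiD := hJD i hi
    simp only [Dp] at hiD
    have hple : i ≤ n - k - 2 := by omega
    have hphi : phi n k i = n - 2 - i := by simp only [phi]; rw [if_pos hple]
    have h2J : n - 2 - i ∈ J := hphi ▸ hJphi i hi
    rcases (show i = k - 2 ∨ (i ≤ k - 4 ∧ 1 ≤ i) by omega) with hc | hc
    · have e0 : n - 2 - i = n - k := by omega
      rw [e0] at h2J
      have e1 : phi n k (n - k) = n - 1 := by simp only [phi]; split_ifs <;> omega
      have h3J : n - 1 ∈ J := e1 ▸ hJphi _ h2J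
      have e2 : phi n k (n - 1) = 1 := by simp only [phi]; split_ifs <;> omega
      have h4J : 1 ∈ J := e2 ▸ hJphi _ h3J
      exact escape1 hn hk hkn J hJD hJphi k 1 h4J (by omega) (by omega) (by omega) (by omega)
    · have hphi2 : phi n k (n - 2 - i) = i + 2 := by
        simp only [phi]; split_ifs <;> omega
      have h3J : i + 2 ∈ J := hphi2 ▸ hJphi _ h2J
      exact ih (i + 2) h3J (by omega) (by omega) (by omega) (by omega)

lemma SwSigma_eq (hn : 4 ≤ n) (hk : 2 ≤ k) (hkn : 2 * k ≤ n) (S : Set ℕ)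
    (hS1 : ∀ i ∈ S, 1 ≤ i ∧ i ≤ n - 1)
    (hS2 : ∀ i ∈ S, Dp n k i ∧ phi n k i ∈ S)
    (hS3 : ∀ j ∈ S, ∃ i, i ∈ S ∧ Dp n k i ∧ phi n k i = j)
    (hS4 : ∀ J : Set ℕ, (∀ i ∈ J, 1 ≤ i ∧ i ≤ n - 1) →
      (∀ i ∈ J, Dp n k i ∧ phi n k i ∈ J) → ∀ i ∈ J, i ∈ S) :
    SwSigma n (w n k (k + 1)) = S := by
  apply Set.Subset.antisymm
  · intro x hx
    rw [SwSigma, Set.mem_sUnion] at hx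
    obtain ⟨J, hJ, hxJ⟩ := hx
    obtain ⟨hIcc, him⟩ := hJ
    have bounds : ∀ i ∈ J, 1 ≤ i ∧ i ≤ n - 1 := by
      intro i hi
      have h := hIcc hi
      rw [Set.mem_Icc] at h
      exact h
    have main : ∀ i ∈ J, Dp n k i ∧ phi n k i ∈ J := by
      intro i hi
      have h1 : (fun i => w n k (k + 1) * sigma n (sW n i) * (w n k (k + 1))⁻¹) i ∈
          sW n '' J := by
        rw [← him]
        exact Set.mem_image_of_mem _ hi
      obtain ⟨j, hjJ, hj⟩ := h1
      have hjb := bounds j hjJ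
      have hib := bounds i hi
      have hf := (f_iff hn hk hkn hib.1 hib.2 hjb.1 hjb.2).mp hj.symm
      exact ⟨hf.1, hf.2 ▸ hjJ⟩
    exact hS4 J bounds main x hxJ
  · intro x hx
    rw [SwSigma, Set.mem_sUnion]
    refine ⟨S, ⟨fun i hi => Set.mem_Icc.mpr (hS1 i hi), ?_⟩, hx⟩
    apply Set.Subset.antisymm
    · rintro y ⟨i, hiS, rfl⟩
      obtain ⟨hD, hphiS⟩ := hS2 i hiS
      have hib := hS1 i hiS
      have hpb := hS1 _ hphiS
      exact ⟨phi n k i, hphiS,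
        ((f_iff hn hk hkn hib.1 hib.2 hpb.1 hpb.2).mpr ⟨hD, rfl⟩).symm⟩
    · rintro y ⟨j, hjS, rfl⟩
      obtain ⟨i, hiS, hD, hphi⟩ := hS3 j hjS
      have hib := hS1 i hiS
      have hjb := hS1 j hjS
      exact ⟨i, hiS, (f_iff hn hk hkn hib.1 hib.2 hjb.1 hjb.2).mpr ⟨hD, hphi.symm⟩⟩

end GUaux
/-- `S(w_{k,k+1},σ)` for odd and even `k`. -/
theorem stmt12 (n : ℕ) [NeZero n] (hn : 4 ≤ n) (k : ℕ) :
    (Odd k → 3 ≤ k → 2 * k ≤ n - 1 →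
      GU.SwSigma n (GU.w n k (k + 1)) =
        Set.Icc k (n - k - 2) ∪ {i : ℕ | Odd i ∧ 1 ≤ i ∧ i ≤ k - 2} ∪
        {i : ℕ | ∃ j : ℕ, Odd j ∧ j ≤ k ∧ i = n - j}) ∧
    (Even k → 2 ≤ k → 2 * k ≤ n →
      GU.SwSigma n (GU.w n k (k + 1)) = Set.Icc k (n - k - 2)) := by
  constructor
  · -- odd case
    intro hodd hk3 h2k
    have hko : k % 2 = 1 := Nat.odd_iff.mp hodd
    have hk : 2 ≤ k := by omega
    have hkn : 2 * k ≤ n := by omega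
    set S : Set ℕ := Set.Icc k (n - k - 2) ∪ {i : ℕ | Odd i ∧ 1 ≤ i ∧ i ≤ k - 2} ∪
        {i : ℕ | ∃ j : ℕ, Odd j ∧ j ≤ k ∧ i = n - j} with hSdef
    have hmem : ∀ x, x ∈ S ↔ ((k ≤ x ∧ x ≤ n - k - 2) ∨ (x % 2 = 1 ∧ 1 ≤ x ∧ x ≤ k - 2) ∨
        (∃ e, e % 2 = 1 ∧ e ≤ k ∧ x = n - e)) := by
      intro x
      simp only [hSdef, Set.mem_union, Set.mem_Icc, Set.mem_setOf_eq, Nat.odd_iff]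
      tauto
    apply GUaux.SwSigma_eq hn hk hkn
    · -- hS1
      intro i hi
      rw [hmem] at hi
      rcases hi with h | h | ⟨e, he⟩ <;> omega
    · -- hS2
      intro i hi
      rw [hmem] at hi
      rcases hi with h | h | ⟨e, he1, he2, he3⟩
      · refine ⟨by simp only [GUaux.Dp]; omega, ?_⟩
        have ep : GUaux.phi n k i = n - 2 - i := by
          simp only [GUaux.phi]; rw [if_pos (by omega)]
        rw [ep, hmem]
        exact Or.inl ⟨by omega, by omega⟩
      · refine ⟨by simp only [GUaux.Dp]; omega, ?_⟩
        have ep : GUaux.phi n k i = n - 2 - i := by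
          simp only [GUaux.phi]; rw [if_pos (by omega)]
        rw [ep, hmem]
        exact Or.inr (Or.inr ⟨i + 2, by omega, by omega, by omega⟩)
      · rcases (show e = k ∨ e ≤ k - 2 by omega) with hc | hc
        · refine ⟨by simp only [GUaux.Dp]; omega, ?_⟩
          have ep : GUaux.phi n k i = n - 1 := by
            simp only [GUaux.phi]; split_ifs <;> omega
          rw [ep, hmem]
          exact Or.inr (Or.inr ⟨1, by omega, by omega, by omega⟩)
        · refine ⟨by simp only [GUaux.Dp]; omega, ?_⟩
          have ep : GUaux.phi n k i = n - i := by
            simp only [GUaux.phi]; split_ifs <;> omega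
          rw [ep, hmem]
          exact Or.inr (Or.inl ⟨by omega, by omega, by omega⟩)
    · -- hS3
      intro j hj
      rw [hmem] at hj
      rcases hj with h | h | ⟨e, he1, he2, he3⟩
      · refine ⟨n - 2 - j, ?_, by simp only [GUaux.Dp]; omega, ?_⟩
        · rw [hmem]; exact Or.inl ⟨by omega, by omega⟩
        · simp only [GUaux.phi]; split_ifs <;> omega
      · refine ⟨n - j, ?_, by simp only [GUaux.Dp]; omega, ?_⟩
        · rw [hmem]; exact Or.inr (Or.inr ⟨j, by omega, by omega, by omega⟩)
        · simp only [GUaux.phi]; split_ifs <;> omega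
      · rcases (show e = 1 ∨ (3 ≤ e ∧ e ≤ k) by omega) with hc | hc
        · refine ⟨n - k, ?_, Or.inr (Or.inl rfl), ?_⟩
          · rw [hmem]; exact Or.inr (Or.inr ⟨k, by omega, by omega, by omega⟩)
          · simp only [GUaux.phi]; split_ifs <;> omega
        · refine ⟨e - 2, ?_, by simp only [GUaux.Dp]; omega, ?_⟩
          · rw [hmem]; exact Or.inr (Or.inl ⟨by omega, by omega, by omega⟩)
          · simp only [GUaux.phi]; split_ifs <;> omega
    · -- hS4
      intro J hb hcl i hi
      have hJD : ∀ i ∈ J, GUaux.Dp n k i := fun i hi => (hcl i hi).1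
      have hJphi : ∀ i ∈ J, GUaux.phi n k i ∈ J := fun i hi => (hcl i hi).2
      have hD := hJD i hi
      simp only [GUaux.Dp] at hD
      rw [hmem]
      rcases hD with h | h | h
      · rcases (show k ≤ i ∨ (i ≤ k - 1 ∧ i % 2 = 0) ∨ (i ≤ k - 2 ∧ i % 2 = 1) by omega)
          with hc | hc | hc
        · exact Or.inl ⟨hc, h.2⟩
        · exact (GUaux.escape1 hn hk hkn J hJD hJphi k i hi
            (by omega) (by omega) (by omega) (by omega)).elim
        · exact Or.inr (Or.inl ⟨by omega, by omega, by omega⟩)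
      · exact Or.inr (Or.inr ⟨k, by omega, by omega, by omega⟩)
      · have ep : GUaux.phi n k i = n - i := by
          simp only [GUaux.phi]; split_ifs <;> omega
        have heJ : n - i ∈ J := ep ▸ hJphi i hi
        rcases (show (n - i) % 2 = 0 ∨ (n - i) % 2 = 1 by omega) with hc | hc
        · exact (GUaux.escape1 hn hk hkn J hJD hJphi k (n - i) heJ
            (by omega) (by omega) (by omega) (by omega)).elim
        · exact Or.inr (Or.inr ⟨n - i, by omega, by omega, by omega⟩)
  · -- even case
    intro heven hk2 hkn
    have hke : k % 2 = 0 := Nat.even_iff.mp heven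
    apply GUaux.SwSigma_eq hn hk2 hkn
    · intro i hi
      rw [Set.mem_Icc] at hi
      omega
    · intro i hi
      rw [Set.mem_Icc] at hi
      refine ⟨by simp only [GUaux.Dp]; omega, ?_⟩
      have ep : GUaux.phi n k i = n - 2 - i := by
        simp only [GUaux.phi]; rw [if_pos (by omega)]
      rw [ep, Set.mem_Icc]
      omega
    · intro j hj
      rw [Set.mem_Icc] at hj
      refine ⟨n - 2 - j, ?_, by simp only [GUaux.Dp]; omega, ?_⟩
      · rw [Set.mem_Icc]; omega
      · simp only [GUaux.phi]; split_ifs <;> omega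
    · intro J hb hcl i hi
      have hJD : ∀ i ∈ J, GUaux.Dp n k i := fun i hi => (hcl i hi).1
      have hJphi : ∀ i ∈ J, GUaux.phi n k i ∈ J := fun i hi => (hcl i hi).2
      have hD := hJD i hi
      simp only [GUaux.Dp] at hD
      rw [Set.mem_Icc]
      rcases hD with h | h | h
      · rcases (show k ≤ i ∨ (i ≤ k - 1 ∧ i % 2 = 1) ∨ (i ≤ k - 1 ∧ i % 2 = 0) by omega)
          with hc | hc | hc
        · exact ⟨hc, h.2⟩
        · exact (GUaux.escape1 hn hk2 hkn J hJD hJphi k i hi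
            (by omega) (by omega) (by omega) (by omega)).elim
        · exact (GUaux.escape2 hn hk2 hkn hke J hJD hJphi k i hi
            (by omega) (by omega) (by omega) (by omega)).elim
      · have e1 : GUaux.phi n k (n - k) = n - 1 := by
          simp only [GUaux.phi]; split_ifs <;> omega
        have h3J : n - 1 ∈ J := by
          have := hJphi i hi
          rw [h, e1] at this
          exact this
        have e2 : GUaux.phi n k (n - 1) = 1 := by
          simp only [GUaux.phi]; split_ifs <;> omega
        have h4J : 1 ∈ J := e2 ▸ hJphi _ h3J
        exact (GUaux.escape1 hn hk2 hkn J hJD hJphi k 1 h4J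
          (by omega) (by omega) (by omega) (by omega)).elim
      · have ep : GUaux.phi n k i = n - i := by
          simp only [GUaux.phi]; split_ifs <;> omega
        have heJ : n - i ∈ J := ep ▸ hJphi i hi
        rcases (show (n - i) % 2 = 1 ∨ (n - i) % 2 = 0 by omega) with hc | hc
        · exact (GUaux.escape1 hn hk2 hkn J hJD hJphi k (n - i) heJ
            (by omega) (by omega) (by omega) (by omega)).elim
        · exact (GUaux.escape2 hn hk2 hkn hke J hJD hJphi k (n - i) heJ
            (by omega) (by omega) (by omega) (by omega)).elim
end

section
/- For 1 ≤ k < l ≤ n, w_{k,l} ≥ w_{k',l'} in the Bruhat order on the extended affine Weyl group if and only if k ≥ k' and l ≥ l' (for 1 ≤ k' < l' ≤ n). -/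
set_option linter.unusedSectionVars false


open Equiv Multiplicative
open Fin.NatCast
-- integer ediv helpers
theorem ediv_neg' {N x : ℤ} (h : 0 < N) (hnd : ¬ N ∣ x) : (-x)/N = -(x/N) - 1 := by
  have hd := Int.mul_ediv_add_emod x N
  have hr0 : 0 ≤ x % N := Int.emod_nonneg x h.ne'
  have hrN : x % N < N := Int.emod_lt_of_pos x h
  have hrne : x % N ≠ 0 := by
    intro h0
    exact hnd (Int.dvd_of_emod_eq_zero h0)
  have hx : -x = (N - x % N) + (-(x/N) - 1) * N := by linarith
  rw [hx, Int.add_mul_ediv_right _ _ h.ne']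
  rw [Int.ediv_eq_zero_of_lt (by omega) (by omega)]
  ring

theorem cross_r_lt {m α β : ℤ} (h : (m ≤ 0 ∧ α + m ≤ β) ∨ (1 ≤ m ∧ β ≤ α + m)) :
    α.natAbs + β.natAbs ≤ (β - m).natAbs + (α + m).natAbs := by omega
theorem cross_r_mid {m α β : ℤ} (h : (m ≤ 0 ∧ α + m ≤ β) ∨ (1 ≤ m ∧ β ≤ α + m)) :
    (-α-1).natAbs + β.natAbs ≤ (m-β-1).natAbs + (α + m).natAbs := by omega
theorem cross_r_gt {m α β : ℤ} (h : (m ≤ 0 ∧ α + m ≤ β) ∨ (1 ≤ m ∧ β ≤ α + m)) :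
    (-α-1).natAbs + (-β-1).natAbs ≤ (m-β-1).natAbs + (-α-1-m).natAbs := by omega
theorem cross_pq {m E : ℤ} (h : (m ≤ 0 ∧ m ≤ E) ∨ (1 ≤ m ∧ E ≤ m-1)) :
    E.natAbs ≤ (2*m-1-E).natAbs := by omega
theorem cross_C {m α β ap aq : ℤ} (hap : 0 ≤ ap ∧ ap ≤ 1) (haq : 0 ≤ aq ∧ aq ≤ 1) (hpq : ap ≤ aq)
    (h : (m ≤ 0 ∧ α + m ≤ β) ∨ (1 ≤ m ∧ β ≤ α + m)) :
    max 0 (α+1-ap) + max 0 (β+1-aq) ≤ max 0 (β-m+1-ap) + max 0 (α+m+1-aq) := by omega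

theorem ediv_mono' {N x y : ℤ} (h : 0 < N) (hxy : x ≤ y) : x / N ≤ y / N :=
  Int.ediv_le_ediv h hxy

theorem ediv_shift' {N x : ℤ} (m : ℤ) (h : N ≠ 0) : (x + m*N)/N = x/N + m :=
  Int.add_mul_ediv_right x m h


namespace GU

variable (n : ℕ) [NeZero n]

-- my additions
/-- The "window" of `x`: the affine permutation values. -/
def win (x : Wt n) (i : Fin n) : ℤ :=
  (x.right i : ℤ) + n * toAdd x.left (x.right i)

/-- Reflections in normal form. -/
def refl' (p q : Fin n) (m : ℤ) : Wt n :=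
  ⟨ofAdd (fun j => if j = p then m else if j = q then -m else 0), Equiv.swap p q⟩

variable {n}

theorem permHom_apply (u : Equiv.Perm (Fin n)) (l : Multiplicative (Fin n → ℤ)) (i : Fin n) :
    toAdd (permHom n u l) i = toAdd l (u.symm i) := rfl

theorem win_mul_refl' (a : Wt n) (p q : Fin n) (m : ℤ) (hpq : p ≠ q) (r : Fin n) :
    win n (a * refl' n p q m) r =
      if r = p then win n a q - m * n else if r = q then win n a p + m * n else win n a r := by
  obtain ⟨l, u⟩ := a
  have hright : ∀ x, ((⟨l, u⟩ : Wt n) * refl' n p q m).right x = u (Equiv.swap p q x) := fun _ => rfl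
  have hleft : ∀ x, toAdd ((⟨l, u⟩ : Wt n) * refl' n p q m).left (u x)
      = toAdd l (u x) + (if x = p then m else if x = q then -m else 0) := by
    intro x
    show toAdd (l * permHom n u (ofAdd (fun j => if j = p then m else if j = q then -m else 0))) (u x)
      = _
    rw [toAdd_mul]
    have : toAdd (permHom n u (ofAdd (fun j => if j = p then m else if j = q then -m else 0))) (u x)
        = (if x = p then m else if x = q then -m else 0) := by
      rw [permHom_apply]
      simp
    simp only [Pi.add_apply, this]
  rcases eq_or_ne r p with hp | hp
  · rw [if_pos hp]
    rw [win, hright, hp, Equiv.swap_apply_left, hleft, win]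
    rw [if_neg hpq.symm, if_pos rfl]
    push_cast
    ring
  · rcases eq_or_ne r q with hq | hq
    · rw [if_neg hp, if_pos hq]
      rw [win, hright, hq, Equiv.swap_apply_right, hleft, win]
      rw [if_pos rfl]
      push_cast
      ring
    · rw [if_neg hp, if_neg hq]
      rw [win, hright, Equiv.swap_apply_of_ne_of_ne hp hq, hleft, win]
      rw [if_neg hp, if_neg hq]
      ring

theorem win_sub (x : Wt n) (i j : Fin n) :
    win n x j - win n x i =
      (((x.right j : ℤ)) - ((x.right i : ℤ))) +
        (toAdd x.left (x.right j) - toAdd x.left (x.right i)) * n := by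
  unfold win; ring

theorem win_residue (x : Wt n) {i j : Fin n} (hij : i ≠ j) :
    ¬ ((n : ℤ) ∣ (win n x j - win n x i)) := by
  have hn : 0 < (n : ℤ) := by exact_mod_cast (NeZero.pos n)
  have hne : x.right i ≠ x.right j := (x.right).injective.ne hij
  have hA : ((x.right j : ℤ)) - ((x.right i : ℤ)) ≠ 0 := by
    intro h0
    apply hne
    have := Fin.is_lt (x.right i); have := Fin.is_lt (x.right j)
    apply Fin.ext; omega
  intro hdvd
  rw [win_sub] at hdvd
  have h2 : (n:ℤ) ∣ (((x.right j : ℤ)) - ((x.right i : ℤ))) :=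
    (Int.dvd_add_right (dvd_mul_left (n:ℤ) _)).mp (by rwa [add_comm] at hdvd)
  have hb1 := Fin.is_lt (x.right i); have hb2 := Fin.is_lt (x.right j)
  have := Int.eq_zero_of_abs_lt_dvd h2 (by
    rw [abs_lt]; constructor <;> push_cast <;> omega)
  exact hA this

theorem ediv_win_sub (x : Wt n) (i j : Fin n) (hij : i ≠ j) :
    (win n x j - win n x i) / n =
      (toAdd x.left (x.right j) - toAdd x.left (x.right i)) +
        (if x.right j < x.right i then -1 else 0) := by
  have hn : 0 < (n : ℤ) := by exact_mod_cast (NeZero.pos n)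
  have hne : x.right i ≠ x.right j := (x.right).injective.ne hij
  have hb1 := Fin.is_lt (x.right i); have hb2 := Fin.is_lt (x.right j)
  have hvne : (x.right i : ℕ) ≠ (x.right j : ℕ) := fun h => hne (Fin.ext h)
  rw [win_sub, ediv_shift' _ hn.ne']
  have hA : (((x.right j : ℤ)) - ((x.right i : ℤ))) / n
      = (if x.right j < x.right i then (-1 : ℤ) else 0) := by
    rcases lt_or_ge (x.right j) (x.right i) with hlt | hge
    · rw [if_pos hlt]
      rw [Fin.lt_def] at hlt
      have h0 : (((x.right j : ℤ)) - ((x.right i : ℤ)) + 1 * n) / n = 0 := by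
        apply Int.ediv_eq_zero_of_lt <;> push_cast <;> omega
      rw [ediv_shift' 1 hn.ne'] at h0
      omega
    · rw [if_neg (not_lt.mpr hge)]
      have hge2 : ((x.right i : ℕ) : ℤ) ≤ ((x.right j : ℕ) : ℤ) := by
        exact_mod_cast Fin.le_def.mp hge
      apply Int.ediv_eq_zero_of_lt <;> push_cast <;> omega
  rw [hA]
  ring

theorem len_eq_win (x : Wt n) :
    len n x = ∑ i : Fin n, ∑ j : Fin n,
      if i < j then ((win n x j - win n x i) / n).natAbs else 0 := by
  unfold len
  refine Finset.sum_congr rfl (fun i _ => Finset.sum_congr rfl (fun j _ => ?_))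
  rcases lt_or_ge i j with hij | hij
  · rw [if_pos hij, if_pos hij, ediv_win_sub x i j hij.ne]
    rcases lt_or_ge (x.right j) (x.right i) with h | h
    · rw [if_pos h, if_pos h]; omega
    · rw [if_neg (not_lt.mpr h), if_neg (not_lt.mpr h)]; omega
  · rw [if_neg (not_lt.mpr hij), if_neg (not_lt.mpr hij)]

theorem len_le_of_crossing (a : Wt n) (p q : Fin n) (m : ℤ) (hpq : p < q)
    (hc : 0 < (((q:ℕ):ℤ) - ((p:ℕ):ℤ) - m * n) * (win n a q - win n a p - m * n)) :
    len n a ≤ len n (a * refl' n p q m) := by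
  have hn : 0 < (n : ℤ) := by exact_mod_cast (NeZero.pos n)
  have hpqn : p ≠ q := ne_of_lt hpq
  set b := a * refl' n p q m with hb
  set P := win n a p with hP
  set Q := win n a q with hQ
  have hwp : win n b p = Q - m * n := by
    rw [hb, win_mul_refl' a p q m hpqn p, if_pos rfl, hQ]
  have hwq : win n b q = P + m * n := by
    rw [hb, win_mul_refl' a p q m hpqn q, if_neg hpqn.symm, if_pos rfl, hP]
  have hwr : ∀ r : Fin n, r ≠ p → r ≠ q → win n b r = win n a r := by
    intro r h1 h2
    rw [hb, win_mul_refl' a p q m hpqn r, if_neg h1, if_neg h2]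
  have hposp : (0:ℤ) ≤ ((p:ℕ):ℤ) := by positivity
  have hposq : ((q:ℕ):ℤ) < n := by exact_mod_cast q.is_lt
  have hppq : ((p:ℕ):ℤ) < ((q:ℕ):ℤ) := by exact_mod_cast (Fin.lt_def.mp hpq)
  have hn2 : (2:ℤ) ≤ n := by omega
  have hm : (m ≤ 0 ∧ 0 < Q - P - m * n) ∨ (1 ≤ m ∧ Q - P - m * n < 0) := by
    rcases mul_pos_iff.mp hc with ⟨h1, h2⟩ | ⟨h1, h2⟩
    · left
      refine ⟨?_, h2⟩
      by_contra hm1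
      push_neg at hm1
      have hmn : (1:ℤ) * n ≤ m * n := by
        apply mul_le_mul_of_nonneg_right _ hn.le
        omega
      linarith
    · right
      refine ⟨?_, h2⟩
      by_contra hm1
      push_neg at hm1
      have hmn : m * n ≤ 0 * n := by
        apply mul_le_mul_of_nonneg_right _ hn.le
        omega
      simp at hmn
      linarith
  have key : (∑ i : Fin n, ∑ j : Fin n,
        (if i < j then (((win n a j - win n a i)/(n:ℤ)).natAbs : ℤ) else 0))
      ≤ (∑ i : Fin n, ∑ j : Fin n,
        (if i < j then (((win n b j - win n b i)/(n:ℤ)).natAbs : ℤ) else 0)) := by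
    classical
    set D : Fin n → Fin n → ℤ := fun i j =>
      (if i < j then (((win n b j - win n b i)/(n:ℤ)).natAbs : ℤ) else 0)
      - (if i < j then (((win n a j - win n a i)/(n:ℤ)).natAbs : ℤ) else 0) with hD
    have hDval : ∀ i j : Fin n, i < j → D i j
        = (((win n b j - win n b i)/(n:ℤ)).natAbs : ℤ)
          - (((win n a j - win n a i)/(n:ℤ)).natAbs : ℤ) := by
      intro i j h; simp only [hD, if_pos h]
    have hDval0 : ∀ i j : Fin n, ¬ i < j → D i j = 0 := by
      intro i j h; simp only [hD, if_neg h, sub_self]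
    suffices hs : 0 ≤ ∑ i : Fin n, ∑ j : Fin n, D i j by
      have he : ∑ i : Fin n, ∑ j : Fin n, D i j
          = (∑ i : Fin n, ∑ j : Fin n,
              (if i < j then (((win n b j - win n b i)/(n:ℤ)).natAbs : ℤ) else 0))
            - (∑ i : Fin n, ∑ j : Fin n,
              (if i < j then (((win n a j - win n a i)/(n:ℤ)).natAbs : ℤ) else 0)) := by
        simp only [hD, Finset.sum_sub_distrib]
      linarith [he ▸ hs]
    set s0 : Finset (Fin n) := Finset.univ \ {p, q} with hs0
    have hsub : ({p, q} : Finset (Fin n)) ⊆ Finset.univ := Finset.subset_univ _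
    have hsplit : ∀ g : Fin n → ℤ, ∑ j, g j = ∑ j ∈ s0, g j + (g p + g q) := by
      intro g
      rw [← Finset.sum_sdiff hsub, Finset.sum_pair hpqn]
    have hmem : ∀ r : Fin n, r ∈ s0 → r ≠ p ∧ r ≠ q := by
      intro r hr
      simp only [hs0, Finset.mem_sdiff, Finset.mem_univ, Finset.mem_insert,
        Finset.mem_singleton, true_and] at hr
      exact ⟨fun h => hr (Or.inl h), fun h => hr (Or.inr h)⟩
    have hDzero : ∀ i ∈ s0, ∀ j ∈ s0, D i j = 0 := by
      intro i hi j hj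
      obtain ⟨hi1, hi2⟩ := hmem i hi
      obtain ⟨hj1, hj2⟩ := hmem j hj
      simp only [hD, hwr i hi1 hi2, hwr j hj1 hj2, sub_self]
    have step1 : ∑ i : Fin n, ∑ j : Fin n, D i j
        = ∑ r ∈ s0, (D p r + D q r + (D r p + D r q))
          + (D p p + D p q + (D q p + D q q)) := by
      calc ∑ i : Fin n, ∑ j : Fin n, D i j
          = ∑ i : Fin n, (∑ j ∈ s0, D i j + (D i p + D i q)) :=
            Finset.sum_congr rfl (fun i _ => hsplit (fun j => D i j))
        _ = ∑ i : Fin n, ∑ j ∈ s0, D i j + ∑ i : Fin n, (D i p + D i q) :=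
            Finset.sum_add_distrib
        _ = ∑ j ∈ s0, ∑ i : Fin n, D i j + ∑ i : Fin n, (D i p + D i q) := by
            rw [Finset.sum_comm]
        _ = ∑ j ∈ s0, (∑ i ∈ s0, D i j + (D p j + D q j))
              + (∑ i ∈ s0, (D i p + D i q) + ((D p p + D p q) + (D q p + D q q))) := by
            rw [Finset.sum_congr rfl (fun j _ => hsplit (fun i => D i j)),
              hsplit (fun i => D i p + D i q)]
        _ = ∑ j ∈ s0, (D p j + D q j)
              + (∑ i ∈ s0, (D i p + D i q) + ((D p p + D p q) + (D q p + D q q))) := by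
            congr 1
            refine Finset.sum_congr rfl (fun j hj => ?_)
            rw [Finset.sum_eq_zero (fun i hi => hDzero i hi j hj)]
            ring
        _ = ∑ r ∈ s0, (D p r + D q r + (D r p + D r q))
              + (D p p + D p q + (D q p + D q q)) := by
            have hdist : ∑ r ∈ s0, (D p r + D q r + (D r p + D r q))
                = ∑ r ∈ s0, (D p r + D q r) + ∑ r ∈ s0, (D r p + D r q) :=
              Finset.sum_add_distrib
            rw [hdist]
            ring
    rw [step1]
    have hDpp : D p p = 0 := hDval0 p p (lt_irrefl p)
    have hDqq : D q q = 0 := hDval0 q q (lt_irrefl q)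
    have hDqp : D q p = 0 := hDval0 q p (asymm hpq)
    -- the (p,q) term
    have hndpq : ¬ ((n:ℤ) ∣ (Q - P)) := win_residue a hpqn
    set E := (Q - P)/(n:ℤ) with hE
    have h2m : (win n b q - win n b p)/(n:ℤ) = 2*m - 1 - E := by
      rw [hwp, hwq]
      have h : P + m*n - (Q - m*n) = -(Q - P) + (2*m)*n := by ring
      rw [h, ediv_shift' _ hn.ne', ediv_neg' hn hndpq]
      ring
    have hEm : (m ≤ 0 ∧ m ≤ E) ∨ (1 ≤ m ∧ E ≤ m - 1) := by
      rcases hm with ⟨h1, h2⟩ | ⟨h1, h2⟩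
      · left
        refine ⟨h1, ?_⟩
        have hle : m * n ≤ Q - P := by linarith
        have := ediv_mono' hn hle
        rwa [Int.mul_ediv_cancel m hn.ne'] at this
      · right
        refine ⟨h1, ?_⟩
        have hle : Q - P ≤ -1 + m * n := by linarith
        have h3 := ediv_mono' hn hle
        rw [ediv_shift' _ hn.ne'] at h3
        have hone : (-1 : ℤ)/(n:ℤ) = -1 := by
          have hnd1 : ¬ ((n:ℤ) ∣ (1:ℤ)) := by
            intro hdvd
            have := Int.le_of_dvd one_pos hdvd
            omega
          have := ediv_neg' hn hnd1
          have h10 : (1:ℤ)/(n:ℤ) = 0 := Int.ediv_eq_zero_of_lt (by omega) (by omega)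
          rw [h10] at this
          simpa using this
        rw [hone] at h3
        omega
    have hDpq : 0 ≤ D p q := by
      rw [hDval p q hpq, h2m, ← hE]
      have := cross_pq hEm
      omega
    -- per r term
    have hperR : ∀ r ∈ s0, 0 ≤ D p r + D q r + (D r p + D r q) := by
      intro r hr
      obtain ⟨hr1, hr2⟩ := hmem r hr
      set R := win n a r with hR
      have hwbr : win n b r = R := hwr r hr1 hr2
      have hndP : ¬ ((n:ℤ) ∣ (P - R)) := win_residue a hr1
      have hndQ : ¬ ((n:ℤ) ∣ (Q - R)) := win_residue a hr2
      set α := (P - R)/(n:ℤ) with hα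
      set β := (Q - R)/(n:ℤ) with hβ
      have hαβ : (m ≤ 0 ∧ α + m ≤ β) ∨ (1 ≤ m ∧ β ≤ α + m) := by
        rcases hm with ⟨h1, h2⟩ | ⟨h1, h2⟩
        · left
          refine ⟨h1, ?_⟩
          have hle : P - R + m * n ≤ Q - R := by linarith
          have h3 := ediv_mono' hn hle
          rwa [ediv_shift' _ hn.ne', ← hα, ← hβ] at h3
        · right
          refine ⟨h1, ?_⟩
          have hle : Q - R ≤ P - R + m * n := by linarith
          have h3 := ediv_mono' hn hle
          rwa [ediv_shift' _ hn.ne', ← hα, ← hβ] at h3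
      have e1 : (Q - m * n - R)/(n:ℤ) = β - m := by
        have h : Q - m*n - R = (Q - R) + (-m)*n := by ring
        rw [h, ediv_shift' _ hn.ne', ← hβ]; ring
      have e2 : (P + m * n - R)/(n:ℤ) = α + m := by
        have h : P + m*n - R = (P - R) + m*n := by ring
        rw [h, ediv_shift' _ hn.ne', ← hα]
      have e3 : (R - (Q - m * n))/(n:ℤ) = m - β - 1 := by
        have h : R - (Q - m*n) = -(Q - R) + m*n := by ring
        rw [h, ediv_shift' _ hn.ne', ediv_neg' hn hndQ, ← hβ]; ring
      have e4 : (R - (P + m * n))/(n:ℤ) = -α - 1 - m := by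
        have h : R - (P + m*n) = -(P - R) + (-m)*n := by ring
        rw [h, ediv_shift' _ hn.ne', ediv_neg' hn hndP, ← hα]; ring
      have e5 : (R - P)/(n:ℤ) = -α - 1 := by
        have h : R - P = -(P - R) := by ring
        rw [h, ediv_neg' hn hndP, ← hα]
      have e6 : (R - Q)/(n:ℤ) = -β - 1 := by
        have h : R - Q = -(Q - R) := by ring
        rw [h, ediv_neg' hn hndQ, ← hβ]
      rcases lt_trichotomy r p with hrp | hrp | hrp
      · have hrq : r < q := lt_trans hrp hpq
        rw [hDval r p hrp, hDval r q hrq, hDval0 p r (asymm hrp), hDval0 q r (asymm hrq),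
          hwbr, hwp, hwq, e1, e2, ← hP, ← hQ, ← hα, ← hβ]
        have := cross_r_lt hαβ
        omega
      · exact absurd hrp.symm hr1.symm  -- r = p contradiction; hr1 : r ≠ p
      · rcases lt_trichotomy r q with hrq | hrq | hrq
        · rw [hDval p r hrp, hDval r q hrq, hDval0 r p (asymm hrp), hDval0 q r (asymm hrq),
            hwbr, hwp, hwq, e3, e2, e5, ← hQ, ← hβ]
          have := cross_r_mid hαβ
          omega
        · exact absurd hrq hr2
        · rw [hDval p r hrp, hDval q r hrq, hDval0 r p (asymm hrp), hDval0 r q (asymm hrq),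
            hwbr, hwp, hwq, e3, e4, e5, e6]
          have := cross_r_gt hαβ
          omega
    have hsum0 : 0 ≤ ∑ r ∈ s0, (D p r + D q r + (D r p + D r q)) :=
      Finset.sum_nonneg hperR
    rw [hDpp, hDqq, hDqp]
    linarith
  rw [len_eq_win, len_eq_win]
  exact_mod_cast key
theorem ofAdd_eq_ofAdd_iff {f g : Fin n → ℤ} : (ofAdd f = ofAdd g) ↔ f = g := by
  constructor
  · intro h; exact ofAdd.injective h
  · intro h; rw [h]

theorem refl'_symm (p q : Fin n) (m : ℤ) (hpq : p ≠ q) : refl' n p q m = refl' n q p (-m) := by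
  apply SemidirectProduct.ext
  · show ofAdd _ = ofAdd _
    rw [ofAdd_eq_ofAdd_iff]
    funext j
    by_cases h1 : j = p
    · simp [h1, hpq]
    · by_cases h2 : j = q <;> simp [h1, h2, hpq.symm]
  · exact Equiv.swap_comm p q

theorem refl'_sq (p q : Fin n) (m : ℤ) (hpq : p ≠ q) : refl' n p q m * refl' n p q m = 1 := by
  apply SemidirectProduct.ext
  · show ((refl' n p q m).left * permHom n (Equiv.swap p q) (refl' n p q m).left) = 1
    apply toAdd.injective
    funext j
    rw [toAdd_mul, Pi.add_apply, permHom_apply]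
    have hrl : ∀ x, toAdd (refl' n p q m).left x
        = if x = p then m else if x = q then -m else 0 := fun x => rfl
    rw [hrl, hrl, toAdd_one, Pi.zero_apply, Equiv.symm_swap]
    by_cases h1 : j = p
    · rw [if_pos h1, h1, Equiv.swap_apply_left]
      rw [if_neg hpq.symm, if_pos rfl]
      ring
    · by_cases h2 : j = q
      · rw [if_neg h1, if_pos h2, h2, Equiv.swap_apply_right, if_pos rfl]
        ring
      · rw [if_neg h1, if_neg h2, Equiv.swap_apply_of_ne_of_ne h1 h2, if_neg h1, if_neg h2]
        ring
  · show Equiv.swap p q * Equiv.swap p q = 1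
    exact Equiv.swap_mul_self p q

theorem conj_refl' (g : Wt n) (p q : Fin n) (m : ℤ) (hpq : p ≠ q) :
    g * refl' n p q m * g⁻¹
      = refl' n (g.right p) (g.right q)
          (m + toAdd g.left (g.right p) - toAdd g.left (g.right q)) := by
  have hinj := g.right.injective
  have hne : g.right p ≠ g.right q := hinj.ne hpq
  apply SemidirectProduct.ext
  · show (g * refl' n p q m * g⁻¹).left = _
    rw [SemidirectProduct.mul_left, SemidirectProduct.mul_left, SemidirectProduct.inv_left,
      SemidirectProduct.mul_right]
    apply toAdd.injective
    funext j
    rw [toAdd_mul, toAdd_mul, Pi.add_apply, Pi.add_apply,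
      permHom_apply, permHom_apply, permHom_apply]
    show toAdd g.left j + toAdd (refl' n p q m).left (g.right.symm j)
        + toAdd g.left⁻¹ ((g.right⁻¹).symm (((g.right * (refl' n p q m).right)).symm j)) = _
    have hrr : (refl' n p q m).right = Equiv.swap p q := rfl
    have hrl : ∀ x, toAdd (refl' n p q m).left x = if x = p then m else if x = q then -m else 0 := by
      intro x; rfl
    have hr2 : (((g.right * (refl' n p q m).right)).symm j)
        = Equiv.swap p q (g.right.symm j) := by
      rw [hrr]; rfl
    rw [hr2, hrl]
    have hback : ∀ x, toAdd g.left⁻¹ ((g.right⁻¹).symm x) = - toAdd g.left (g.right x) := by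
      intro x; rfl
    rw [hback]
    show _ = toAdd (ofAdd (fun j => if j = g.right p then (m + toAdd g.left (g.right p) - toAdd g.left (g.right q)) else if j = g.right q then -(m + toAdd g.left (g.right p) - toAdd g.left (g.right q)) else 0)) j
    rw [toAdd_ofAdd]
    by_cases h1 : g.right.symm j = p
    · have hj : j = g.right p := by rw [← h1]; simp
      rw [if_pos h1, h1, Equiv.swap_apply_left, hj, if_pos rfl]
      ring
    · by_cases h2 : g.right.symm j = q
      · have hj : j = g.right q := by rw [← h2]; simp
        rw [if_neg h1, if_pos h2, h2, Equiv.swap_apply_right, hj, if_neg hne.symm, if_pos rfl]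
        ring
      · have hj1 : j ≠ g.right p := by
          intro h; apply h1; rw [h]; simp
        have hj2 : j ≠ g.right q := by
          intro h; apply h2; rw [h]; simp
        rw [if_neg h1, if_neg h2, Equiv.swap_apply_of_ne_of_ne h1 h2, Equiv.apply_symm_apply,
          if_neg hj1, if_neg hj2]
        ring
  · show g.right * (refl' n p q m).right * g.right⁻¹ = Equiv.swap (g.right p) (g.right q)
    exact (Equiv.swap_apply_apply g.right p q).symm

theorem saff_form (hn2 : 2 ≤ n) (i : ZMod n) :
    ∃ p q : Fin n, ∃ m : ℤ, p ≠ q ∧ saff n i = refl' n p q m := by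
  by_cases h0 : i = 0
  · refine ⟨((0 : ℕ) : Fin n), ((n - 1 : ℕ) : Fin n), 1, ?_, ?_⟩
    · intro h
      have h1 : ((0 : ℕ) : Fin n).val = 0 := by
        rw [Fin.val_cast_of_lt (by omega)]
      have h2 : ((n - 1 : ℕ) : Fin n).val = n - 1 := by
        rw [Fin.val_cast_of_lt (by omega)]
      rw [h] at h1
      omega
    · rw [h0]
      unfold saff
      rw [if_pos rfl]
      rfl
  · have hval : i.val < n := ZMod.val_lt i
    have hval0 : i.val ≠ 0 := by
      intro h
      exact h0 ((ZMod.val_eq_zero i).mp h)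
    refine ⟨((i.val - 1 : ℕ) : Fin n), ((i.val : ℕ) : Fin n), 0, ?_, ?_⟩
    · intro h
      have h1 : ((i.val - 1 : ℕ) : Fin n).val = i.val - 1 := by
        rw [Fin.val_cast_of_lt (by omega)]
      have h2 : ((i.val : ℕ) : Fin n).val = i.val := by
        rw [Fin.val_cast_of_lt (by omega)]
      rw [h, h2] at h1
      omega
    · show saff n i = _
      unfold saff
      rw [if_neg h0]
      apply SemidirectProduct.ext
      · show (1 : Multiplicative (Fin n → ℤ)) = ofAdd _
        rw [show (1 : Multiplicative (Fin n → ℤ)) = ofAdd 0 from rfl, ofAdd_eq_ofAdd_iff]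
        funext j
        by_cases h1 : j = ((i.val - 1 : ℕ) : Fin n)
        · simp [h1]
        · by_cases h2 : j = ((i.val : ℕ) : Fin n) <;> simp [h1, h2]
      · rfl

variable (n)

variable {n}

theorem isRefl_form (hn2 : 2 ≤ n) {r : Wt n} (h : isRefl n r) :
    ∃ p q : Fin n, ∃ m : ℤ, p < q ∧ r = refl' n p q m := by
  obtain ⟨g, i, rfl⟩ := h
  obtain ⟨p, q, m, hpq, hsaff⟩ := saff_form hn2 i
  rw [hsaff, conj_refl' g p q m hpq]
  have hne : g.right p ≠ g.right q := g.right.injective.ne hpq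
  rcases lt_or_gt_of_ne hne with hlt | hgt
  · exact ⟨g.right p, g.right q, _, hlt, rfl⟩
  · refine ⟨g.right q, g.right p, -(m + toAdd g.left (g.right p) - toAdd g.left (g.right q)), hgt, ?_⟩
    exact refl'_symm _ _ _ hne


variable (n)

/-- The Björner–Brenti style counting invariant. -/
def Cinv (i : Fin n) (j : ℤ) (x : Wt n) : ℤ :=
  ∑ r : Fin n, max 0 ((win n x r - j)/(n:ℤ) + 1 - if i < r then 1 else 0)

variable {n}

theorem crossing_pos_of_len_lt {a : Wt n} (p q : Fin n) (m : ℤ) (hpq : p < q)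
    (hlen : len n a < len n (a * refl' n p q m)) :
    0 < (((q:ℕ):ℤ) - ((p:ℕ):ℤ) - m * n) * (win n a q - win n a p - m * n) := by
  have hn : 0 < (n : ℤ) := by exact_mod_cast (NeZero.pos n)
  have hpqn : p ≠ q := ne_of_lt hpq
  have hposp : (0:ℤ) ≤ ((p:ℕ):ℤ) := by positivity
  have hposq : ((q:ℕ):ℤ) < n := by exact_mod_cast q.is_lt
  have hppq : ((p:ℕ):ℤ) < ((q:ℕ):ℤ) := by exact_mod_cast (Fin.lt_def.mp hpq)
  have hf1 : (((q:ℕ):ℤ) - ((p:ℕ):ℤ) - m * n) ≠ 0 := by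
    rcases le_or_gt m 0 with hm | hm
    · have : m * n ≤ 0 * n := mul_le_mul_of_nonneg_right hm hn.le
      simp only [zero_mul] at this
      intro h; linarith
    · have : 1 * n ≤ m * n := mul_le_mul_of_nonneg_right (by omega) hn.le
      simp only [one_mul] at this
      intro h; linarith
  have hf2 : (win n a q - win n a p - m * n) ≠ 0 := by
    intro h
    apply win_residue a hpqn
    exact ⟨m, by linarith⟩
  rcases lt_trichotomy (0:ℤ) ((((q:ℕ):ℤ) - ((p:ℕ):ℤ) - m * n) * (win n a q - win n a p - m * n)) with hpos | hzero | hneg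
  · exact hpos
  · exact absurd hzero.symm (mul_ne_zero hf1 hf2)
  · exfalso
    set b := a * refl' n p q m with hb
    have hab : b * refl' n p q m = a := by
      rw [hb, mul_assoc, refl'_sq p q m hpqn, mul_one]
    have hwp : win n b p = win n a q - m * n := by
      rw [hb, win_mul_refl' a p q m hpqn p, if_pos rfl]
    have hwq : win n b q = win n a p + m * n := by
      rw [hb, win_mul_refl' a p q m hpqn q, if_neg hpqn.symm, if_pos rfl]
    have hcross' : 0 < (((q:ℕ):ℤ) - ((p:ℕ):ℤ) - m * n) * (win n b q - win n b p - m * n) := by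
      rw [hwp, hwq]
      nlinarith [hneg]
    have := len_le_of_crossing b p q m hpq hcross'
    rw [hab] at this
    omega

theorem cinv_step (hn2 : 2 ≤ n) {a b : Wt n}
    (hstep : (∃ r, isRefl n r ∧ b = a * r) ∧ len n a < len n b) (i : Fin n) (j : ℤ) :
    Cinv n i j a ≤ Cinv n i j b := by
  classical
  have hn : 0 < (n : ℤ) := by exact_mod_cast (NeZero.pos n)
  obtain ⟨⟨r, hr, hb⟩, hlen⟩ := hstep
  obtain ⟨p, q, m, hpq, rfl⟩ := isRefl_form hn2 hr
  subst hb
  have hpqn : p ≠ q := ne_of_lt hpq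
  have hc := crossing_pos_of_len_lt p q m hpq hlen
  set P := win n a p with hP
  set Q := win n a q with hQ
  set b := a * refl' n p q m with hb
  have hwp : win n b p = Q - m * n := by
    rw [hb, win_mul_refl' a p q m hpqn p, if_pos rfl, hQ]
  have hwq : win n b q = P + m * n := by
    rw [hb, win_mul_refl' a p q m hpqn q, if_neg hpqn.symm, if_pos rfl, hP]
  have hwr : ∀ r : Fin n, r ≠ p → r ≠ q → win n b r = win n a r := by
    intro r h1 h2
    rw [hb, win_mul_refl' a p q m hpqn r, if_neg h1, if_neg h2]
  have hposp : (0:ℤ) ≤ ((p:ℕ):ℤ) := by positivity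
  have hposq : ((q:ℕ):ℤ) < n := by exact_mod_cast q.is_lt
  have hppq : ((p:ℕ):ℤ) < ((q:ℕ):ℤ) := by exact_mod_cast (Fin.lt_def.mp hpq)
  have hm : (m ≤ 0 ∧ 0 < Q - P - m * n) ∨ (1 ≤ m ∧ Q - P - m * n < 0) := by
    rcases mul_pos_iff.mp hc with ⟨h1, h2⟩ | ⟨h1, h2⟩
    · left
      refine ⟨?_, h2⟩
      by_contra hm1
      push_neg at hm1
      have hmn : (1:ℤ) * n ≤ m * n := mul_le_mul_of_nonneg_right (by omega) hn.le
      linarith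
    · right
      refine ⟨?_, h2⟩
      by_contra hm1
      push_neg at hm1
      have hmn : m * n ≤ 0 * n := mul_le_mul_of_nonneg_right (by omega) hn.le
      simp only [zero_mul] at hmn
      linarith
  set α := (P - j)/(n:ℤ) with hα
  set β := (Q - j)/(n:ℤ) with hβ
  have hαβ : (m ≤ 0 ∧ α + m ≤ β) ∨ (1 ≤ m ∧ β ≤ α + m) := by
    rcases hm with ⟨h1, h2⟩ | ⟨h1, h2⟩
    · left
      refine ⟨h1, ?_⟩
      have hle : P - j + m * n ≤ Q - j := by linarith
      have h3 := ediv_mono' hn hle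
      rwa [ediv_shift' _ hn.ne', ← hα, ← hβ] at h3
    · right
      refine ⟨h1, ?_⟩
      have hle : Q - j ≤ P - j + m * n := by linarith
      have h3 := ediv_mono' hn hle
      rwa [ediv_shift' _ hn.ne', ← hα, ← hβ] at h3
  have e1 : (Q - m * n - j)/(n:ℤ) = β - m := by
    have h : Q - m*n - j = (Q - j) + (-m)*n := by ring
    rw [h, ediv_shift' _ hn.ne', ← hβ]; ring
  have e2 : (P + m * n - j)/(n:ℤ) = α + m := by
    have h : P + m*n - j = (P - j) + m*n := by ring
    rw [h, ediv_shift' _ hn.ne', ← hα]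
  -- split the sums
  set f : Wt n → Fin n → ℤ :=
    fun x r => max 0 ((win n x r - j)/(n:ℤ) + 1 - if i < r then 1 else 0) with hf
  have hCa : Cinv n i j a = ∑ r : Fin n, f a r := rfl
  have hCb : Cinv n i j b = ∑ r : Fin n, f b r := rfl
  set s0 : Finset (Fin n) := Finset.univ \ {p, q} with hs0
  have hsub : ({p, q} : Finset (Fin n)) ⊆ Finset.univ := Finset.subset_univ _
  have hsplit : ∀ g : Fin n → ℤ, ∑ r, g r = ∑ r ∈ s0, g r + (g p + g q) := by
    intro g
    rw [← Finset.sum_sdiff hsub, Finset.sum_pair hpqn]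
  have hmem : ∀ r : Fin n, r ∈ s0 → r ≠ p ∧ r ≠ q := by
    intro r hr
    simp only [hs0, Finset.mem_sdiff, Finset.mem_univ, Finset.mem_insert,
      Finset.mem_singleton, true_and] at hr
    exact ⟨fun h => hr (Or.inl h), fun h => hr (Or.inr h)⟩
  have hsame : ∀ r ∈ s0, f b r = f a r := by
    intro r hr
    obtain ⟨h1, h2⟩ := hmem r hr
    simp only [hf, hwr r h1 h2]
  rw [hCa, hCb, hsplit (f a), hsplit (f b)]
  have hsumeq : (∑ r ∈ s0, f b r) = ∑ r ∈ s0, f a r := Finset.sum_congr rfl hsame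
  rw [hsumeq]
  have hIp : (0:ℤ) ≤ (if i < p then (1:ℤ) else 0) ∧ (if i < p then (1:ℤ) else 0) ≤ 1 := by
    split <;> simp
  have hIq : (0:ℤ) ≤ (if i < q then (1:ℤ) else 0) ∧ (if i < q then (1:ℤ) else 0) ≤ 1 := by
    split <;> simp
  have hIpq : (if i < p then (1:ℤ) else 0) ≤ (if i < q then (1:ℤ) else 0) := by
    rcases lt_or_ge i p with h | h
    · rw [if_pos h, if_pos (lt_trans h hpq)]
    · rw [if_neg (not_lt.mpr h)]
      rcases lt_or_ge i q with h2 | h2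
      · rw [if_pos h2]; omega
      · rw [if_neg (not_lt.mpr h2)]
  have hfp : f b p = max 0 (β - m + 1 - if i < p then 1 else 0) := by
    simp only [hf, hwp, e1]
  have hfq : f b q = max 0 (α + m + 1 - if i < q then 1 else 0) := by
    simp only [hf, hwq, e2]
  have hfap : f a p = max 0 (α + 1 - if i < p then 1 else 0) := by
    simp only [hf, ← hP, ← hα]
  have hfaq : f a q = max 0 (β + 1 - if i < q then 1 else 0) := by
    simp only [hf, ← hQ, ← hβ]
  rw [hfp, hfq, hfap, hfaq]
  have := cross_C hIp hIq hIpq hαβ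
  omega

theorem cinv_mono (hn2 : 2 ≤ n) {v x : Wt n} (h : bruhatLE n v x) (i : Fin n) (j : ℤ) :
    Cinv n i j v ≤ Cinv n i j x := by
  induction h with
  | refl => exact le_refl _
  | tail hab hstep ih => exact le_trans ih (cinv_step hn2 hstep i j)


/-- The window of `w_{k,l}`, as an explicit function. -/
def Wfun (n k l : ℕ) (x : Fin n) : ℤ :=
  if (x:ℕ) + 1 < k then ((x:ℕ) : ℤ)
  else if (x:ℕ) + 1 = k then -2
  else if (x:ℕ) + 1 < l then ((x:ℕ) : ℤ) - 1
  else if (x:ℕ) + 1 = l then -1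
  else ((x:ℕ) : ℤ) - 2

theorem win_mul_pW (x : Wt n) (s : Equiv.Perm (Fin n)) (r : Fin n) :
    win n (x * ⟨1, s⟩) r = win n x (s r) := by
  have hr : (x * (⟨1, s⟩ : Wt n)).right r = x.right (s r) := rfl
  have hl : (x * (⟨1, s⟩ : Wt n)).left = x.left := by
    rw [SemidirectProduct.mul_left, map_one, mul_one]
  unfold win
  rw [hr, hl]

theorem sW_mul_self (i : ℕ) : sW n i * sW n i = 1 := by
  apply SemidirectProduct.ext
  · show (1 : Multiplicative (Fin n → ℤ)) * permHom n (sf n i) 1 = 1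
    rw [map_one, mul_one]
  · show sf n i * sf n i = 1
    exact Equiv.swap_mul_self _ _

theorem sdesc_split (a b : ℕ) (h : b ≤ a) : sdesc n a b = sdesc n a (b+1) * sW n b := by
  unfold sdesc
  have h1 : a + 1 - b = (a + 1 - (b+1)) + 1 := by omega
  have h2 : a - (a + 1 - (b+1)) = b := by omega
  rw [h1, List.range_succ, List.map_append, List.prod_append]
  simp only [List.map_cons, List.map_nil, List.prod_cons, List.prod_nil, mul_one]
  congr 2
  all_goals omega

theorem sdesc_empty (a b : ℕ) (h : a < b) : sdesc n a b = 1 := by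
  unfold sdesc
  have : a + 1 - b = 0 := by omega
  rw [this]
  simp

theorem w_base (hn2 : 2 ≤ n) : w n (n-1) n = tW n (mu n) := by
  unfold w
  rw [sdesc_empty (n-2) (n-1) (by omega), sdesc_empty (n-1) n (by omega), mul_one, mul_one]

theorem w_k_step (k : ℕ) (hk : 1 ≤ k) (hkn : k ≤ n-2) :
    w n k n = w n (k+1) n * sW n k := by
  unfold w
  rw [sdesc_empty (n-1) n (by omega), mul_one, mul_one,
    sdesc_split (n-2) k (by omega), mul_assoc]

theorem w_l_step (k l : ℕ) (hl : l ≤ n-1) :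
    w n k l = w n k (l+1) * sW n l := by
  unfold w
  rw [sdesc_split (n-1) l (by omega), ← mul_assoc]

theorem sf_apply_val (i : ℕ) (h1 : 1 ≤ i) (h2 : i ≤ n-1) (x : Fin n) :
    ((sf n i x : Fin n) : ℕ) = if (x:ℕ) = i-1 then i else if (x:ℕ) = i then i-1 else (x:ℕ) := by
  have hn2 : 2 ≤ n := by omega
  have hv1 : ((i - 1 : ℕ) : Fin n).val = i - 1 := Fin.val_cast_of_lt (by omega)
  have hv2 : ((i : ℕ) : Fin n).val = i := Fin.val_cast_of_lt (by omega)
  unfold sf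
  rw [Equiv.swap_apply_def]
  by_cases hx1 : x = ((i - 1 : ℕ) : Fin n)
  · rw [if_pos hx1, hv2]
    have : (x:ℕ) = i - 1 := by rw [hx1, hv1]
    rw [if_pos this]
  · rw [if_neg hx1]
    have hx1' : (x:ℕ) ≠ i - 1 := by
      intro h; apply hx1; apply Fin.ext; rw [hv1, h]
    by_cases hx2 : x = ((i : ℕ) : Fin n)
    · rw [if_pos hx2, hv1]
      have : (x:ℕ) = i := by rw [hx2, hv2]
      rw [if_neg hx1', if_pos this]
    · rw [if_neg hx2]
      have hx2' : (x:ℕ) ≠ i := by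
        intro h; apply hx2; apply Fin.ext; rw [hv2, h]
      rw [if_neg hx1', if_neg hx2']

theorem win_tWmu (r : Fin n) :
    win n (tW n (mu n)) r = if n ≤ (r:ℕ) + 2 then ((r:ℕ):ℤ) - (n:ℤ) else ((r:ℕ):ℤ) := by
  have hr : (tW n (mu n)).right r = r := rfl
  have hl : toAdd (tW n (mu n)).left r = mu n r := rfl
  unfold win
  rw [hr, hl]
  unfold mu
  rcases le_or_gt n ((r:ℕ) + 2) with h | h
  · rw [if_pos (by omega : n - 2 ≤ (r:ℕ)), if_pos h]
    ring
  · rw [if_neg (by omega : ¬ (n - 2 ≤ (r:ℕ))), if_neg (by omega : ¬ (n ≤ (r:ℕ) + 2))]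
    ring

theorem win_w_kn : ∀ d k : ℕ, k = n - 1 - d → 1 ≤ k → ∀ x : Fin n,
    win n (w n k n) x = Wfun n k n x := by
  intro d
  induction d with
  | zero =>
    intro k hk hk1 x
    have hn2 : 2 ≤ n := by omega
    have hkn : k = n - 1 := by omega
    rw [hkn, w_base hn2, win_tWmu]
    have hx := x.is_lt
    unfold Wfun
    split_ifs <;> push_cast <;> omega
  | succ d ih =>
    intro k hk hk1 x
    have hn2 : 2 ≤ n := by omega
    by_cases hkd : k = n - 1
    · rw [hkd, w_base hn2, win_tWmu]
      have hx := x.is_lt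
      unfold Wfun
      split_ifs <;> push_cast <;> omega
    · have hk2 : k ≤ n - 2 := by omega
      have hstep := w_k_step k hk1 hk2
      have hsW : sW n k = (⟨1, sf n k⟩ : Wt n) := rfl
      rw [hstep, hsW, win_mul_pW]
      rw [ih (k+1) (by omega) (by omega)]
      have hx := x.is_lt
      have hsx := (sf n k x).is_lt
      have hsf := sf_apply_val k hk1 (by omega) x
      unfold Wfun
      by_cases h1 : (x:ℕ) = k-1
      · rw [if_pos h1] at hsf
        split_ifs <;> omega
      · rw [if_neg h1] at hsf
        by_cases h2 : (x:ℕ) = k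
        · rw [if_pos h2] at hsf
          split_ifs <;> omega
        · rw [if_neg h2] at hsf
          split_ifs <;> omega

theorem win_w_l : ∀ d k l : ℕ, l = n - d → 1 ≤ k → k < l → ∀ x : Fin n,
    win n (w n k l) x = Wfun n k l x := by
  intro d
  induction d with
  | zero =>
    intro k l hl hk1 hkl x
    have hln : l = n := by omega
    rw [hln]
    exact win_w_kn (n - 1 - k) k (by omega) hk1 x
  | succ d ih =>
    intro k l hl hk1 hkl x
    by_cases hln : l = n
    · rw [hln]
      exact win_w_kn (n - 1 - k) k (by omega) hk1 x
    · have hl2 : l ≤ n - 1 := by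
        have := hl ▸ Nat.sub_le n (d+1)
        omega
      have hstep := w_l_step k l hl2
      have hsW : sW n l = (⟨1, sf n l⟩ : Wt n) := rfl
      rw [hstep, hsW, win_mul_pW]
      rw [ih k (l+1) (by omega) hk1 (by omega)]
      have hx := x.is_lt
      have hl1 : 1 ≤ l := by omega
      have hsx := (sf n l x).is_lt
      have hsf := sf_apply_val l hl1 hl2 x
      unfold Wfun
      by_cases h1 : (x:ℕ) = l-1
      · rw [if_pos h1] at hsf
        split_ifs <;> omega
      · rw [if_neg h1] at hsf
        by_cases h2 : (x:ℕ) = l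
        · rw [if_pos h2] at hsf
          split_ifs <;> omega
        · rw [if_neg h2] at hsf
          split_ifs <;> omega

theorem win_w (k l : ℕ) (hk : 1 ≤ k) (hkl : k < l) (hl : l ≤ n) (x : Fin n) :
    win n (w n k l) x = Wfun n k l x :=
  win_w_l (n - l) k l (by omega) hk hkl x


theorem ediv_neg_one {N : ℤ} (h : 0 < N) : (-1)/N = -1 := by
  have h1 : (-1 : ℤ) = (N-1) + (-1)*N := by ring
  rw [h1, ediv_shift' _ h.ne', Int.ediv_eq_zero_of_lt (by omega) (by omega)]
  ring

theorem ediv_small {D : ℤ} (hn : 0 < (n:ℤ)) (h1 : -(n:ℤ) < D) (h2 : D < (n:ℤ)) :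
    ((D/(n:ℤ)).natAbs) = if D < 0 then 1 else 0 := by
  rcases lt_or_ge D 0 with h | h
  · rw [if_pos h]
    have h3 : (D + 1*(n:ℤ))/(n:ℤ) = 0 := Int.ediv_eq_zero_of_lt (by omega) (by omega)
    rw [ediv_shift' _ hn.ne'] at h3
    omega
  · rw [if_neg (not_lt.mpr h), Int.ediv_eq_zero_of_lt h h2]
    rfl

theorem Wfun_lb (k l : ℕ) (x : Fin n) : -2 ≤ Wfun n k l x := by
  have hx := x.is_lt
  unfold Wfun
  split_ifs <;> omega

theorem Wfun_ub (k l : ℕ) (x : Fin n) (hk : 1 ≤ k) (hkl : k < l) (hl : l ≤ n) :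
    Wfun n k l x ≤ (n:ℤ) - 3 := by
  have hx := x.is_lt
  unfold Wfun
  split_ifs <;> omega

theorem count_lt (j : Fin n) : (∑ i : Fin n, if i < j then (1:ℕ) else 0) = (j:ℕ) := by
  have hc : ∀ i : Fin n, (if i < j then (1:ℕ) else 0) = (if (i:ℕ) < (j:ℕ) then 1 else 0) := by
    intro i
    by_cases h : (i:ℕ) < (j:ℕ)
    · rw [if_pos (Fin.lt_def.mpr h), if_pos h]
    · rw [if_neg (fun hh => h (Fin.lt_def.mp hh)), if_neg h]
  rw [Finset.sum_congr rfl (fun i _ => hc i),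
    Fin.sum_univ_eq_sum_range (fun v => if v < (j:ℕ) then (1:ℕ) else 0)]
  rw [← Finset.sum_filter]
  have hf : (Finset.range n).filter (fun v => v < (j:ℕ)) = Finset.range (j:ℕ) := by
    ext v
    simp only [Finset.mem_filter, Finset.mem_range]
    have := j.is_lt
    omega
  rw [hf, Finset.sum_const, Finset.card_range, smul_eq_mul, mul_one]

theorem count_le (i : Fin n) : (∑ r : Fin n, if r ≤ i then (1:ℤ) else 0) = ((i:ℕ):ℤ) + 1 := by
  have hc : ∀ r : Fin n, (if r ≤ i then (1:ℤ) else 0) = (if (r:ℕ) < (i:ℕ)+1 then 1 else 0) := by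
    intro r
    have hri : (r ≤ i) ↔ ((r:ℕ) < (i:ℕ)+1) := by rw [Fin.le_def]; omega
    by_cases h : (r:ℕ) < (i:ℕ)+1
    · rw [if_pos (hri.mpr h), if_pos h]
    · rw [if_neg (fun hh => h (hri.mp hh)), if_neg h]
  rw [Finset.sum_congr rfl (fun r _ => hc r),
    Fin.sum_univ_eq_sum_range (fun v => if v < (i:ℕ)+1 then (1:ℤ) else 0)]
  rw [← Finset.sum_filter]
  have hf : (Finset.range n).filter (fun v => v < (i:ℕ)+1) = Finset.range ((i:ℕ)+1) := by
    ext v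
    simp only [Finset.mem_filter, Finset.mem_range]
    have := i.is_lt
    omega
  rw [hf, Finset.sum_const, Finset.card_range, nsmul_eq_mul, mul_one]
  push_cast
  ring

theorem len_w (k l : ℕ) (hk : 1 ≤ k) (hkl : k < l) (hl : l ≤ n) :
    len n (w n k l) = k + l - 3 := by
  classical
  have hn : 0 < (n : ℤ) := by exact_mod_cast (NeZero.pos n)
  have hn2 : 2 ≤ n := by
    have := Fin.pos_iff_nonempty (n := n)
    omega
  rw [len_eq_win]
  have hterm : ∀ i j : Fin n,
      (if i < j then ((win n (w n k l) j - win n (w n k l) i)/(n:ℤ)).natAbs else 0)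
      = (if i < j then (if Wfun n k l j < Wfun n k l i then 1 else 0) else 0) := by
    intro i j
    by_cases hij : i < j
    · rw [if_pos hij, if_pos hij, win_w k l hk hkl hl, win_w k l hk hkl hl]
      have lb1 := Wfun_lb k l i
      have lb2 := Wfun_lb k l j
      have ub1 := Wfun_ub k l i hk hkl hl
      have ub2 := Wfun_ub k l j hk hkl hl
      rw [ediv_small hn (by omega) (by omega)]
      by_cases h : Wfun n k l j < Wfun n k l i
      · rw [if_pos h, if_pos (by omega : Wfun n k l j - Wfun n k l i < 0)]
      · rw [if_neg h, if_neg (by omega : ¬ (Wfun n k l j - Wfun n k l i < 0))]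
    · rw [if_neg hij, if_neg hij]
  rw [Finset.sum_congr rfl (fun i _ => Finset.sum_congr rfl (fun j _ => hterm i j))]
  rw [Finset.sum_comm]
  set kpos : Fin n := ⟨k-1, by omega⟩ with hkpos
  set lpos : Fin n := ⟨l-1, by omega⟩ with hlpos
  have hinner : ∀ j : Fin n,
      (∑ i : Fin n, if i < j then (if Wfun n k l j < Wfun n k l i then 1 else 0) else 0)
      = (if (j:ℕ) = k-1 then k-1 else if (j:ℕ) = l-1 then l-2 else 0) := by
    intro j
    have hjlt := j.is_lt
    by_cases hj1 : (j:ℕ) = k-1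
    · rw [if_pos hj1]
      have hc : ∀ i : Fin n, (if i < j then (if Wfun n k l j < Wfun n k l i then (1:ℕ) else 0) else 0)
          = (if i < j then 1 else 0) := by
        intro i
        by_cases hij : i < j
        · have hiv := Fin.lt_def.mp hij
          have hilt := i.is_lt
          rw [if_pos hij, if_pos hij, if_pos ?_]
          unfold Wfun
          split_ifs <;> omega
        · rw [if_neg hij, if_neg hij]
      rw [Finset.sum_congr rfl (fun i _ => hc i), count_lt j, hj1]
    · by_cases hj2 : (j:ℕ) = l-1
      · rw [if_neg hj1, if_pos hj2]
        have hc : ∀ i : Fin n, (if i < j then (if Wfun n k l j < Wfun n k l i then (1:ℕ) else 0) else 0)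
            = (if i = kpos then 0 else (if i < j then 1 else 0)) := by
          intro i
          have hilt := i.is_lt
          by_cases hik : i = kpos
          · rw [if_pos hik]
            have hiv : (i:ℕ) = k-1 := by rw [hik]
            by_cases hij : i < j
            · rw [if_pos hij, if_neg ?_]
              unfold Wfun
              split_ifs <;> omega
            · rw [if_neg hij]
          · rw [if_neg hik]
            have hiv : (i:ℕ) ≠ k-1 := by
              intro h; apply hik; apply Fin.ext; rw [h]
            by_cases hij : i < j
            · have hijv := Fin.lt_def.mp hij
              rw [if_pos hij, if_pos hij, if_pos ?_]
              unfold Wfun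
              split_ifs <;> omega
            · rw [if_neg hij, if_neg hij]
        rw [Finset.sum_congr rfl (fun i _ => hc i)]
        have h1 := Finset.add_sum_erase Finset.univ
          (fun i => if i = kpos then 0 else (if i < j then (1:ℕ) else 0)) (Finset.mem_univ kpos)
        simp only [ite_true, eq_self_iff_true] at h1
        have h2 : ∑ i ∈ Finset.univ.erase kpos,
            (if i = kpos then 0 else (if i < j then (1:ℕ) else 0))
            = ∑ i ∈ Finset.univ.erase kpos, (if i < j then (1:ℕ) else 0) := by
          refine Finset.sum_congr rfl (fun i hi => ?_)
          rw [if_neg (Finset.mem_erase.mp hi).1]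
        have h3 := Finset.add_sum_erase Finset.univ
          (fun i => if i < j then (1:ℕ) else 0) (Finset.mem_univ kpos)
        have hkj : kpos < j := by
          rw [Fin.lt_def]
          show k-1 < (j:ℕ)
          omega
        rw [if_pos hkj] at h3
        rw [count_lt j] at h3
        omega
      · rw [if_neg hj1, if_neg hj2]
        apply Finset.sum_eq_zero
        intro i _
        by_cases hij : i < j
        · have hijv := Fin.lt_def.mp hij
          have hilt := i.is_lt
          rw [if_pos hij, if_neg ?_]
          unfold Wfun
          split_ifs <;> omega
        · rw [if_neg hij]
  rw [Finset.sum_congr rfl (fun j _ => hinner j)]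
  have hsum : ∀ j : Fin n, (if (j:ℕ) = k-1 then k-1 else if (j:ℕ) = l-1 then l-2 else 0)
      = (if j = kpos then k-1 else 0) + (if j = lpos then l-2 else 0) := by
    intro j
    by_cases h1 : j = kpos
    · have hv : (j:ℕ) = k-1 := by rw [h1]
      rw [if_pos hv, if_pos h1, if_neg ?_]
      · omega
      · intro h2
        have : (j:ℕ) = l-1 := by rw [h2]
        omega
    · have hv : (j:ℕ) ≠ k-1 := by
        intro h; apply h1; apply Fin.ext; rw [h]
      rw [if_neg hv, if_neg h1, zero_add]
      by_cases h2 : j = lpos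
      · have hv2 : (j:ℕ) = l-1 := by rw [h2]
        rw [if_pos hv2, if_pos h2]
      · have hv2 : (j:ℕ) ≠ l-1 := by
          intro h; apply h2; apply Fin.ext; rw [h]
        rw [if_neg hv2, if_neg h2]
  rw [Finset.sum_congr rfl (fun j _ => hsum j), Finset.sum_add_distrib,
    Finset.sum_ite_eq' Finset.univ kpos (fun _ => k-1),
    Finset.sum_ite_eq' Finset.univ lpos (fun _ => l-2),
    if_pos (Finset.mem_univ kpos), if_pos (Finset.mem_univ lpos)]
  omega


theorem cinv_w_neg1 (k l : ℕ) (hk : 1 ≤ k) (hkl : k < l) (hl : l ≤ n) (i : Fin n) :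
    Cinv n i (-1) (w n k l) = ((i:ℕ):ℤ) + 1 - (if k-1 ≤ (i:ℕ) then 1 else 0) := by
  classical
  have hn : 0 < (n : ℤ) := by exact_mod_cast (NeZero.pos n)
  have hn2 : 2 ≤ n := by omega
  unfold Cinv
  set kpos : Fin n := ⟨k-1, by omega⟩ with hkpos
  have hterm : ∀ r : Fin n,
      max 0 ((win n (w n k l) r - (-1))/(n:ℤ) + 1 - if i < r then 1 else 0)
      = (if r = kpos then 0 else (if r ≤ i then (1:ℤ) else 0)) := by
    intro r
    rw [win_w k l hk hkl hl]
    have hrlt := r.is_lt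
    by_cases hr : r = kpos
    · have hrv : (r:ℕ) = k-1 := by rw [hr]
      have hW : Wfun n k l r = -2 := by
        unfold Wfun; split_ifs <;> omega
      rw [hW, if_pos hr]
      have hdiv : ((-2 : ℤ) - (-1))/(n:ℤ) = -1 := by
        norm_num
        exact ediv_neg_one hn
      rw [hdiv]
      by_cases hir : i < r
      · rw [if_pos hir]; norm_num
      · rw [if_neg hir]; norm_num
    · have hrv : (r:ℕ) ≠ k-1 := by
        intro h; apply hr; apply Fin.ext; rw [h]
      have hW0 : 0 ≤ Wfun n k l r + 1 ∧ Wfun n k l r + 1 < n := by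
        unfold Wfun; split_ifs <;> constructor <;> push_cast <;> omega
      have hdiv : (Wfun n k l r - (-1))/(n:ℤ) = 0 := by
        apply Int.ediv_eq_zero_of_lt <;> omega
      rw [if_neg hr, hdiv]
      by_cases hir : i < r
      · rw [if_pos hir, if_neg (not_le.mpr hir)]
        norm_num
      · rw [if_neg hir, if_pos (not_lt.mp hir)]
        norm_num
  rw [Finset.sum_congr rfl (fun r _ => hterm r)]
  have h1 := Finset.add_sum_erase Finset.univ
    (fun r => if r = kpos then 0 else (if r ≤ i then (1:ℤ) else 0)) (Finset.mem_univ kpos)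
  simp only [ite_true, eq_self_iff_true] at h1
  have h2 : ∑ r ∈ Finset.univ.erase kpos,
      (if r = kpos then 0 else (if r ≤ i then (1:ℤ) else 0))
      = ∑ r ∈ Finset.univ.erase kpos, (if r ≤ i then (1:ℤ) else 0) := by
    refine Finset.sum_congr rfl (fun r hr => ?_)
    rw [if_neg (Finset.mem_erase.mp hr).1]
  have h3 := Finset.add_sum_erase Finset.univ
    (fun r => if r ≤ i then (1:ℤ) else 0) (Finset.mem_univ kpos)
  rw [count_le i] at h3
  have hcond : (kpos ≤ i) ↔ (k-1 ≤ (i:ℕ)) := by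
    rw [Fin.le_def]
  by_cases hki : k-1 ≤ (i:ℕ)
  · rw [if_pos (hcond.mpr hki)] at h3
    rw [if_pos hki]
    omega
  · rw [if_neg (fun hh => hki (hcond.mp hh))] at h3
    rw [if_neg hki]
    omega

theorem cinv_w_zero (k l : ℕ) (hk : 1 ≤ k) (hkl : k < l) (hl : l ≤ n) (i : Fin n) :
    Cinv n i 0 (w n k l) = ((i:ℕ):ℤ) + 1 - (if k-1 ≤ (i:ℕ) then 1 else 0)
      - (if l-1 ≤ (i:ℕ) then 1 else 0) := by
  classical
  have hn : 0 < (n : ℤ) := by exact_mod_cast (NeZero.pos n)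
  have hn2 : 2 ≤ n := by omega
  unfold Cinv
  set kpos : Fin n := ⟨k-1, by omega⟩ with hkpos
  set lpos : Fin n := ⟨l-1, by omega⟩ with hlpos
  have hkl' : kpos ≠ lpos := by
    intro h
    have : k-1 = l-1 := by
      have := congrArg Fin.val h
      simpa using this
    omega
  have hterm : ∀ r : Fin n,
      max 0 ((win n (w n k l) r - 0)/(n:ℤ) + 1 - if i < r then 1 else 0)
      = (if r = kpos then 0 else if r = lpos then 0 else (if r ≤ i then (1:ℤ) else 0)) := by
    intro r
    rw [win_w k l hk hkl hl]
    have hrlt := r.is_lt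
    by_cases hr : r = kpos
    · have hrv : (r:ℕ) = k-1 := by rw [hr]
      have hW : Wfun n k l r = -2 := by
        unfold Wfun; split_ifs <;> omega
      rw [hW, if_pos hr]
      have hdiv : ((-2 : ℤ) - 0)/(n:ℤ) = -1 := by
        norm_num
        have h : (-2 : ℤ) = (n-2) + (-1)*n := by ring
        rw [h, ediv_shift' _ hn.ne', Int.ediv_eq_zero_of_lt (by omega) (by omega)]
        ring
      rw [hdiv]
      by_cases hir : i < r
      · rw [if_pos hir]; norm_num
      · rw [if_neg hir]; norm_num
    · by_cases hr2 : r = lpos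
      · have hrv : (r:ℕ) = l-1 := by rw [hr2]
        have hrv' : (r:ℕ) ≠ k-1 := by
          intro h; apply hr; apply Fin.ext; rw [h]
        have hW : Wfun n k l r = -1 := by
          unfold Wfun; split_ifs <;> omega
        rw [hW, if_neg hr, if_pos hr2]
        have hdiv : ((-1 : ℤ) - 0)/(n:ℤ) = -1 := by
          norm_num
          exact ediv_neg_one hn
        rw [hdiv]
        by_cases hir : i < r
        · rw [if_pos hir]; norm_num
        · rw [if_neg hir]; norm_num
      · have hrv : (r:ℕ) ≠ k-1 := by
          intro h; apply hr; apply Fin.ext; rw [h]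
        have hrv2 : (r:ℕ) ≠ l-1 := by
          intro h; apply hr2; apply Fin.ext; rw [h]
        have hW0 : 0 ≤ Wfun n k l r ∧ Wfun n k l r < n := by
          unfold Wfun; split_ifs <;> constructor <;> push_cast <;> omega
        have hdiv : (Wfun n k l r - 0)/(n:ℤ) = 0 := by
          apply Int.ediv_eq_zero_of_lt <;> omega
        rw [if_neg hr, if_neg hr2, hdiv]
        by_cases hir : i < r
        · rw [if_pos hir, if_neg (not_le.mpr hir)]
          norm_num
        · rw [if_neg hir, if_pos (not_lt.mp hir)]
          norm_num
  rw [Finset.sum_congr rfl (fun r _ => hterm r)]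
  set s2 : Finset (Fin n) := Finset.univ \ {kpos, lpos} with hs2
  have hsub : ({kpos, lpos} : Finset (Fin n)) ⊆ Finset.univ := Finset.subset_univ _
  have hsplit : ∀ g : Fin n → ℤ, ∑ r, g r = ∑ r ∈ s2, g r + (g kpos + g lpos) := by
    intro g
    rw [← Finset.sum_sdiff hsub, Finset.sum_pair hkl']
  have hmem : ∀ r : Fin n, r ∈ s2 → r ≠ kpos ∧ r ≠ lpos := by
    intro r hr
    simp only [hs2, Finset.mem_sdiff, Finset.mem_univ, Finset.mem_insert,
      Finset.mem_singleton, true_and] at hr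
    exact ⟨fun h => hr (Or.inl h), fun h => hr (Or.inr h)⟩
  rw [hsplit]
  have hks : (if kpos = kpos then (0:ℤ) else if kpos = lpos then 0 else if kpos ≤ i then 1 else 0) = 0 :=
    if_pos rfl
  have hls : (if lpos = kpos then (0:ℤ) else if lpos = lpos then 0 else if lpos ≤ i then 1 else 0) = 0 := by
    rw [if_neg (Ne.symm hkl'), if_pos rfl]
  rw [hks, hls]
  · have hc : ∑ r ∈ s2, (if r = kpos then 0 else if r = lpos then 0 else (if r ≤ i then (1:ℤ) else 0))
        = ∑ r ∈ s2, (if r ≤ i then (1:ℤ) else 0) := by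
      refine Finset.sum_congr rfl (fun r hr => ?_)
      obtain ⟨h1, h2⟩ := hmem r hr
      rw [if_neg h1, if_neg h2]
    rw [hc]
    have hcount := hsplit (fun r => if r ≤ i then (1:ℤ) else 0)
    rw [count_le i] at hcount
    have hcondk : (kpos ≤ i) ↔ (k-1 ≤ (i:ℕ)) := by rw [Fin.le_def]
    have hcondl : (lpos ≤ i) ↔ (l-1 ≤ (i:ℕ)) := by rw [Fin.le_def]
    by_cases hki : k-1 ≤ (i:ℕ) <;> by_cases hli : l-1 ≤ (i:ℕ)
    · rw [if_pos (hcondk.mpr hki), if_pos (hcondl.mpr hli)] at hcount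
      rw [if_pos hki, if_pos hli]
      omega
    · rw [if_pos (hcondk.mpr hki), if_neg (fun hh => hli (hcondl.mp hh))] at hcount
      rw [if_pos hki, if_neg hli]
      omega
    · rw [if_neg (fun hh => hki (hcondk.mp hh)), if_pos (hcondl.mpr hli)] at hcount
      rw [if_neg hki, if_pos hli]
      omega
    · rw [if_neg (fun hh => hki (hcondk.mp hh)), if_neg (fun hh => hli (hcondl.mp hh))] at hcount
      rw [if_neg hki, if_neg hli]
      omega

theorem saff_of_range (t : ℕ) (h1 : 1 ≤ t) (h2 : t ≤ n-1) : saff n (t : ZMod n) = sW n t := by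
  have hn2 : 2 ≤ n := by omega
  unfold saff
  have hne : (t : ZMod n) ≠ 0 := by
    intro h
    have hdvd := (ZMod.natCast_eq_zero_iff t n).mp h
    have := Nat.le_of_dvd (by omega) hdvd
    omega
  rw [if_neg hne]
  congr 1
  exact ZMod.val_cast_of_lt (by omega)

theorem isRefl_saff (i : ZMod n) : isRefl n (saff n i) :=
  ⟨1, i, by rw [one_mul, inv_one, mul_one]⟩

theorem isRefl_conj (g : Wt n) {r : Wt n} (h : isRefl n r) : isRefl n (g * r * g⁻¹) := by
  obtain ⟨g', i, rfl⟩ := h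
  exact ⟨g * g', i, by group⟩

theorem step_l (k l : ℕ) (hk : 1 ≤ k) (hkl : k < l) (hl : l ≤ n-1) :
    (∃ r, isRefl n r ∧ w n k (l+1) = w n k l * r) ∧ len n (w n k l) < len n (w n k (l+1)) := by
  have hn2 : 2 ≤ n := by omega
  constructor
  · refine ⟨saff n (l : ZMod n), isRefl_saff _, ?_⟩
    rw [saff_of_range l (by omega) hl]
    rw [w_l_step k l hl, mul_assoc, sW_mul_self, mul_one]
  · rw [len_w k l hk hkl (by omega), len_w k (l+1) hk (by omega) (by omega)]
    omega

theorem step_k (k l : ℕ) (hk : 1 ≤ k) (hkl : k+1 < l) (hl : l ≤ n) :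
    (∃ r, isRefl n r ∧ w n (k+1) l = w n k l * r) ∧ len n (w n k l) < len n (w n (k+1) l) := by
  have hn2 : 2 ≤ n := by omega
  constructor
  · set g := (sdesc n (n-1) l)⁻¹ with hg
    refine ⟨g * saff n (k : ZMod n) * g⁻¹, isRefl_conj g (isRefl_saff _), ?_⟩
    rw [saff_of_range k (by omega) (by omega)]
    rw [hg, inv_inv]
    show w n (k+1) l = w n k l * ((sdesc n (n-1) l)⁻¹ * sW n k * sdesc n (n-1) l)
    unfold w
    rw [sdesc_split (n-2) k (by omega)]
    have hs : sW n k * sW n k = 1 := sW_mul_self k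
    calc tW n (mu n) * sdesc n (n-2) (k+1) * sdesc n (n-1) l
        = tW n (mu n) * sdesc n (n-2) (k+1) * (sW n k * sW n k) * sdesc n (n-1) l := by
          rw [hs, mul_one]
      _ = tW n (mu n) * (sdesc n (n-2) (k+1) * sW n k) * sdesc n (n-1) l *
            ((sdesc n (n-1) l)⁻¹ * sW n k * sdesc n (n-1) l) := by
          group
  · rw [len_w k l hk (by omega) hl, len_w (k+1) l (by omega) (by omega) hl]
    omega

theorem chain_l : ∀ d k l : ℕ, 1 ≤ k → k < l → l + d ≤ n →
    bruhatLE n (w n k l) (w n k (l+d)) := by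
  intro d
  induction d with
  | zero => intro k l _ _ _; exact Relation.ReflTransGen.refl
  | succ d ih =>
    intro k l hk hkl hld
    have h1 := ih k l hk hkl (by omega)
    have h2 := step_l (n := n) k (l+d) hk (by omega) (by omega)
    exact Relation.ReflTransGen.tail h1 h2

theorem chain_k : ∀ d k l : ℕ, 1 ≤ k → k + d < l → l ≤ n →
    bruhatLE n (w n k l) (w n (k+d) l) := by
  intro d
  induction d with
  | zero => intro k l _ _ _; exact Relation.ReflTransGen.refl
  | succ d ih =>
    intro k l hk hkd hl
    have h1 := ih k l hk (by omega) hl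
    have h2 := step_k (n := n) (k+d) l (by omega) (by omega) hl
    exact Relation.ReflTransGen.tail h1 h2

variable (n)



end GU
/-- `w_{k,l} ≥ w_{k',l'}` in the Bruhat order iff `k ≥ k'` and `l ≥ l'`. -/
theorem stmt15 (n : ℕ) [NeZero n] (hn : 2 ≤ n) (k l k' l' : ℕ)
    (hk : 1 ≤ k) (hkl : k < l) (hl : l ≤ n)
    (hk' : 1 ≤ k') (hkl' : k' < l') (hl' : l' ≤ n) :
    GU.bruhatLE n (GU.w n k' l') (GU.w n k l) ↔ (k' ≤ k ∧ l' ≤ l) := by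
  constructor
  · intro h
    constructor
    · set ip : Fin n := ⟨k-1, by omega⟩ with hip
      have hm := GU.cinv_mono hn h ip (-1)
      rw [GU.cinv_w_neg1 k' l' hk' hkl' hl', GU.cinv_w_neg1 k l hk hkl hl] at hm
      have hv : (ip : ℕ) = k-1 := rfl
      rw [hv] at hm
      split_ifs at hm <;> omega
    · set ip : Fin n := ⟨l-1, by omega⟩ with hip
      have hm := GU.cinv_mono hn h ip 0
      rw [GU.cinv_w_zero k' l' hk' hkl' hl', GU.cinv_w_zero k l hk hkl hl] at hm
      have hv : (ip : ℕ) = l-1 := rfl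
      rw [hv] at hm
      split_ifs at hm <;> omega
  · rintro ⟨hkk, hll⟩
    have h1 : GU.bruhatLE n (GU.w n k' l') (GU.w n k' l) := by
      have hc := GU.chain_l (n := n) (l - l') k' l' hk' hkl' (by omega)
      have he : l' + (l - l') = l := by omega
      rwa [he] at hc
    have h2 : GU.bruhatLE n (GU.w n k' l) (GU.w n k l) := by
      have hc := GU.chain_k (n := n) (k - k') k' l hk' (by omega) hl
      have he : k' + (k - k') = k := by omega
      rwa [he] at hc
    exact h1.trans h2
end
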